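/- Assume the setup, the stability assumption, and the γ-feasibility assumption, and let γ ∈ [γ_min, γ_max]. Then for every tangent space T' = T(L') at a rank-r symmetric matrix L' with ρ(T, T') ≤ ξ(T)/2, writing Y = Ω × T', the maximum effect on the orthogonal complement is controlled: for all (M, N) ∈ Ω × T', ‖P_{Y^⊥} D H*(M+N)‖_γ ≤ (1−ν) ‖P_Y D H*(M+N)‖_γ. -/

import Mathlib

noncomputable section

open scoped BigOperators
open Matrix

namespace IsingSL

/-- The space of real `d × d` matrices.  Symmetry (membership in `Sym(d)`) is imposed
through explicit hypotheses `Matrix.IsSymm`. -/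
abbrev Mat (d : ℕ) := Matrix (Fin d) (Fin d) ℝ

/-- The trace inner product `⟨A, B⟩ = tr(Aᵀ B)`. -/
def minner {d : ℕ} (A B : Mat d) : ℝ := (Aᵀ * B).trace

/-- Entrywise `ℓ∞`-norm of a matrix. -/
def normInf {d : ℕ} (M : Mat d) : ℝ := ⨆ p : Fin d × Fin d, |M p.1 p.2|

/-- Entrywise `ℓ1`-norm of a matrix. -/
def norm1 {d : ℕ} (M : Mat d) : ℝ := ∑ i, ∑ j, |M i j|

/-- Euclidean norm of a vector. -/
def vnorm {d : ℕ} (v : Fin d → ℝ) : ℝ := Real.sqrt (∑ i, v i ^ 2)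

/-- Spectral norm (`ℓ2`-operator norm) of a matrix. -/
def specNorm {d : ℕ} (M : Mat d) : ℝ :=
  sSup {t | ∃ v : Fin d → ℝ, vnorm v ≤ 1 ∧ t = vnorm (M.mulVec v)}

/-- Nuclear norm of a matrix (sum of singular values), characterized via
trace duality with the spectral norm. -/
def nucNorm {d : ℕ} (M : Mat d) : ℝ :=
  sSup {t | ∃ B : Mat d, specNorm B ≤ 1 ∧ t = minner M B}

/-- The `γ`-norm of a pair of matrices: `‖(S, L)‖_γ = max {‖S‖_∞/γ, ‖L‖}`. -/
def ganorm {d : ℕ} (γ : ℝ) (S L : Mat d) : ℝ := max (normInf S / γ) (specNorm L)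

/-- The `{0,1}`-vector corresponding to `x : Fin d → Bool`. -/
def b2r {d : ℕ} (x : Fin d → Bool) : Fin d → ℝ := fun i => if x i then 1 else 0

/-- The sufficient statistics `Φ(x) = x xᵀ` for `x ∈ {0,1}^d`. -/
def phi {d : ℕ} (x : Fin d → Bool) : Mat d := Matrix.of fun i j => b2r x i * b2r x j

/-- The log-partition function `a(Θ)` of the pairwise Ising model. -/
def logA {d : ℕ} (Θ : Mat d) : ℝ :=
  Real.log (∑ x : Fin d → Bool, Real.exp (minner Θ (phi x)))

/-- The Ising probability mass function `p(x) = exp(⟨Θ, Φ(x)⟩ - a(Θ))`. -/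
def isingPMF {d : ℕ} (Θ : Mat d) (x : Fin d → Bool) : ℝ :=
  Real.exp (minner Θ (phi x) - logA Θ)

/-- `Φ* = E_Θ[Φ]`, the expected sufficient statistics; this is the gradient `∇a(Θ)`
of the log-partition function w.r.t. the trace inner product. -/
def meanPhi {d : ℕ} (Θ : Mat d) : Mat d := ∑ x : Fin d → Bool, isingPMF Θ x • phi x

/-- The Hessian `∇²a(Θ)` of the log-partition function as a linear operator on matrices;
it is the covariance operator `M ↦ E[⟨Φ,M⟩Φ] - ⟨E[Φ],M⟩E[Φ]` of the sufficient statistics. -/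
def hessA {d : ℕ} (Θ : Mat d) (M : Mat d) : Mat d :=
  (∑ x : Fin d → Bool, (isingPMF Θ x * minner (phi x) M) • phi x)
    - minner (meanPhi Θ) M • meanPhi Θ

/-- The empirical second-moment matrix `Φ^n` of a sample. -/
def empPhi {d n : ℕ} (xs : Fin n → (Fin d → Bool)) : Mat d :=
  (n : ℝ)⁻¹ • ∑ k, phi (xs k)

/-- The negative log-likelihood `ℓ(Θ) = a(Θ) - ⟨Θ, Φ^n⟩`. -/
def nll {d : ℕ} (Phin Θ : Mat d) : ℝ := logA Θ - minner Θ Phin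

/-- The probability of the event `E` under `n` i.i.d. samples from the Ising
distribution with parameter `Θ`. -/
def samplesProb {d : ℕ} (Θ : Mat d) (n : ℕ) (E : Set (Fin n → (Fin d → Bool))) : ℝ :=
  ∑ xs : Fin n → (Fin d → Bool), E.indicator (fun ys => ∏ k, isingPMF Θ (ys k)) xs

/-- Probability vectors on `{0,1}^d`. -/
def IsProbVec {d : ℕ} (p : (Fin d → Bool) → ℝ) : Prop :=
  (∀ x, 0 ≤ p x) ∧ ∑ x : Fin d → Bool, p x = 1

/-- The (Shannon) entropy `H(p) = -Σ_x p(x) log p(x)` (with `0 log 0 = 0`). -/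
def entropy {d : ℕ} (p : (Fin d → Bool) → ℝ) : ℝ :=
  -∑ x : Fin d → Bool, p x * Real.log (p x)

/-- The expectation `E_p[Φ]` of the sufficient statistics under `p`. -/
def Ephi {d : ℕ} (p : (Fin d → Bool) → ℝ) : Mat d :=
  ∑ x : Fin d → Bool, p x • phi x

/-- The linear identification of `d × d` matrices with the euclidean space on `d·d`
coordinates; under this identification the euclidean inner product corresponds to the
trace inner product on matrices. -/
def matEuclid (d : ℕ) : Mat d ≃ₗ[ℝ] EuclideanSpace ℝ (Fin d × Fin d) where
  toFun M := WithLp.toLp 2 (fun p => M p.1 p.2)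
  invFun v := Matrix.of fun i j => v (i, j)
  map_add' _ _ := rfl
  map_smul' _ _ := rfl
  left_inv _ := rfl
  right_inv _ := rfl

/-- Orthogonal projection onto a subspace `V` of `Mat d`, w.r.t. the trace inner product. -/
def proj {d : ℕ} (V : Submodule ℝ (Mat d)) (M : Mat d) : Mat d :=
  (matEuclid d).symm
    ((Submodule.orthogonalProjectionOnto (V.map ((matEuclid d) : Mat d →ₗ[ℝ] EuclideanSpace ℝ (Fin d × Fin d)))
      ((matEuclid d) M) : EuclideanSpace ℝ (Fin d × Fin d)))

/-- Projection onto the orthogonal complement of `V`. -/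
def projPerp {d : ℕ} (V : Submodule ℝ (Mat d)) (M : Mat d) : Mat d := M - proj V M

/-- The twisting `ρ(T, T') = max_{‖M‖=1} ‖(P_T - P_{T'}) M‖` between two subspaces. -/
def rho {d : ℕ} (T T' : Submodule ℝ (Mat d)) : ℝ :=
  sSup {t | ∃ M : Mat d, specNorm M = 1 ∧ t = specNorm (proj T M - proj T' M)}

/-- `ξ(T)`: the smallest `ξ` with `‖M‖_∞ ≤ ξ ‖M‖` for all `M ∈ T`. -/
def xi {d : ℕ} (T : Submodule ℝ (Mat d)) : ℝ :=
  sInf {c | ∀ M ∈ T, normInf M ≤ c * specNorm M}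

/-- `μ(Ω)`: the smallest `μ` with `‖N‖ ≤ μ ‖N‖_∞` for all `N ∈ Ω`. -/
def mu {d : ℕ} (Om : Submodule ℝ (Mat d)) : ℝ :=
  sInf {c | ∀ N ∈ Om, specNorm N ≤ c * normInf N}

/-- `Ω(S) = {M ∈ Sym(d) : supp(M) ⊆ supp(S)}`, the tangent space at `S` to the variety
of symmetric matrices with at most `|supp S|` nonzero entries. -/
def OmegaS {d : ℕ} (S : Mat d) : Submodule ℝ (Mat d) where
  carrier := {M | M.IsSymm ∧ ∀ i j, S i j = 0 → M i j = 0}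
  add_mem' := by
    rintro a b ⟨ha, ha0⟩ ⟨hb, hb0⟩
    refine ⟨?_, fun i j h => ?_⟩
    · show (a + b)ᵀ = a + b
      rw [Matrix.transpose_add, ha, hb]
    · show a i j + b i j = 0
      rw [ha0 i j h, hb0 i j h, add_zero]
  zero_mem' := by
    refine ⟨?_, fun i j _ => rfl⟩
    show (0 : Mat _)ᵀ = 0
    rw [Matrix.transpose_zero]
  smul_mem' := by
    rintro c a ⟨ha, ha0⟩
    refine ⟨?_, fun i j h => ?_⟩
    · show (c • a)ᵀ = c • a
      rw [Matrix.transpose_smul, ha]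
    · show c * a i j = 0
      rw [ha0 i j h, mul_zero]

/-- `T(L) = {U Xᵀ + X Uᵀ : X ∈ ℝ^{d×r}}`, the tangent space at `L = U D Uᵀ` to the
variety of symmetric matrices of rank at most `r`. -/
def TSpace {d r : ℕ} (U : Matrix (Fin d) (Fin r) ℝ) : Submodule ℝ (Mat d) where
  carrier := {M | ∃ X : Matrix (Fin d) (Fin r) ℝ, M = U * Xᵀ + X * Uᵀ}
  add_mem' := by
    rintro a b ⟨X, rfl⟩ ⟨Y, rfl⟩
    exact ⟨X + Y, by rw [Matrix.transpose_add, Matrix.mul_add, Matrix.add_mul]; abel⟩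
  zero_mem' := ⟨0, by simp⟩
  smul_mem' := by
    rintro c a ⟨X, rfl⟩
    exact ⟨c • X, by rw [Matrix.transpose_smul, Matrix.mul_smul, Matrix.smul_mul, smul_add]⟩

/-- `T'` is the tangent space `T(L')` at some rank-`r` symmetric matrix
`L' = U D Uᵀ` (restricted eigenvalue decomposition: `U` with orthonormal columns,
`D` invertible diagonal). -/
def IsTangentSpace (d r : ℕ) (T' : Submodule ℝ (Mat d)) : Prop :=
  ∃ (U : Matrix (Fin d) (Fin r) ℝ) (D : Matrix (Fin r) (Fin r) ℝ),
    Uᵀ * U = 1 ∧ D.IsDiag ∧ IsUnit D.det ∧ T' = TSpace U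

/-- A solution of the tangent-space constrained problem
`min_{(S,L) ∈ Om × T'} ℓ(S+L) + λ(γ‖S‖₁ + ‖L‖_*)`. -/
def IsYSol {d : ℕ} (Om T' : Submodule ℝ (Mat d)) (Phin : Mat d) (lam γ : ℝ)
    (p : Mat d × Mat d) : Prop :=
  p.1 ∈ Om ∧ p.2 ∈ T' ∧
    ∀ q : Mat d × Mat d, q.1 ∈ Om → q.2 ∈ T' →
      nll Phin (p.1 + p.2) + lam * (γ * norm1 p.1 + nucNorm p.2) ≤
        nll Phin (q.1 + q.2) + lam * (γ * norm1 q.1 + nucNorm q.2)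

/-- A solution of the convex program
`min_{S, L ∈ Sym(d), L ⪰ 0} ℓ(S+L) + λ(γ‖S‖₁ + tr L)`. -/
def IsSLSol {d : ℕ} (Phin : Mat d) (lam γ : ℝ) (p : Mat d × Mat d) : Prop :=
  p.1.IsSymm ∧ p.2.PosSemidef ∧
    ∀ q : Mat d × Mat d, q.1.IsSymm → q.2.PosSemidef →
      nll Phin (p.1 + p.2) + lam * (γ * norm1 p.1 + p.2.trace) ≤
        nll Phin (q.1 + q.2) + lam * (γ * norm1 q.1 + q.2.trace)

/-- The setup: a nonzero symmetric matrix `S*` and a positive-semidefinite `L*` with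
restricted eigenvalue decomposition `L* = U D Uᵀ` (so `L*` has rank `r`). -/
structure Setup (d r : ℕ) where
  Sstar : Mat d
  U : Matrix (Fin d) (Fin r) ℝ
  Dg : Matrix (Fin r) (Fin r) ℝ
  hU : Uᵀ * U = 1
  hDdiag : Dg.IsDiag
  hDunit : IsUnit Dg.det
  hSsymm : Sstar.IsSymm
  hSne : Sstar ≠ 0
  hLpsd : (U * Dg * Uᵀ).PosSemidef

namespace Setup

variable {d r : ℕ} (C : Setup d r)

/-- `L* = U D Uᵀ`. -/
def Lstar : Mat d := C.U * C.Dg * C.Uᵀ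

/-- `Θ* = S* + L*`. -/
def Thstar : Mat d := C.Sstar + C.Lstar

/-- `Ω = Ω(S*)`. -/
def Om : Submodule ℝ (Mat d) := OmegaS C.Sstar

/-- `T = T(L*)`. -/
def Tt : Submodule ℝ (Mat d) := TSpace C.U

/-- `H* = ∇²a(Θ*)`, the Hessian of the log-partition function at `Θ*`. -/
def Hop : Mat d → Mat d := hessA C.Thstar

/-- `‖H*‖`, the operator norm of `H*` w.r.t. the spectral norm. -/
def HopNorm : ℝ := sSup {t | ∃ M : Mat d, specNorm M = 1 ∧ t = specNorm (C.Hop M)}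

/-- `ξ(T)`. -/
def xiT : ℝ := xi C.Tt

/-- `μ(Ω)`. -/
def muOm : ℝ := mu C.Om

/-- `α_Ω = min {‖P_Ω H*(M)‖_∞ : M ∈ Ω, ‖M‖_∞ = 1}`. -/
def alphaOm : ℝ :=
  sInf {t | ∃ M, M ∈ C.Om ∧ normInf M = 1 ∧ t = normInf (proj C.Om (C.Hop M))}

/-- `α_{T,ε}`. -/
def alphaT (ε : ℝ) : ℝ :=
  sInf {t | ∃ T' : Submodule ℝ (Mat d), IsTangentSpace d r T' ∧ rho C.Tt T' ≤ ε ∧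
    ∃ M, M ∈ T' ∧ specNorm M = 1 ∧ t = specNorm (proj T' (C.Hop M))}

/-- `δ_Ω = max {‖P_{Ω^⊥} H*(M)‖_∞ : M ∈ Ω, ‖M‖_∞ = 1}`. -/
def deltaOm : ℝ :=
  sSup {t | ∃ M, M ∈ C.Om ∧ normInf M = 1 ∧ t = normInf (projPerp C.Om (C.Hop M))}

/-- `δ_{T,ε}`. -/
def deltaT (ε : ℝ) : ℝ :=
  sSup {t | ∃ T' : Submodule ℝ (Mat d), IsTangentSpace d r T' ∧ rho C.Tt T' ≤ ε ∧
    ∃ M, M ∈ T' ∧ specNorm M = 1 ∧ t = specNorm (projPerp T' (C.Hop M))}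

/-- `β_Ω = max {‖H*(M)‖ : M ∈ Ω, ‖M‖ = 1}`. -/
def betaOm : ℝ :=
  sSup {t | ∃ M, M ∈ C.Om ∧ specNorm M = 1 ∧ t = specNorm (C.Hop M)}

/-- `β_T`. -/
def betaT : ℝ :=
  sSup {t | ∃ T' : Submodule ℝ (Mat d), IsTangentSpace d r T' ∧ rho C.Tt T' ≤ C.xiT / 2 ∧
    ∃ M, M ∈ T' ∧ normInf M = 1 ∧ t = normInf (C.Hop M)}

/-- `β = max {β_Ω, β_T}`. -/
def betaC : ℝ := max C.betaOm C.betaT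

/-- `α = min {α_Ω, α_{T,ξ(T)/2}}`. -/
def alphaC : ℝ := min C.alphaOm (C.alphaT (C.xiT / 2))

/-- `δ = max {δ_Ω, δ_{T,ξ(T)/2}}`. -/
def deltaC : ℝ := max C.deltaOm (C.deltaT (C.xiT / 2))

/-- The stability assumption: `α > 0` and `δ/α ≤ 1 - 2ν` for some `ν ∈ (0, 1/2]`. -/
def Stability (ν : ℝ) : Prop :=
  0 < C.alphaC ∧ 0 < ν ∧ ν ≤ 1 / 2 ∧ C.deltaC / C.alphaC ≤ 1 - 2 * ν

/-- `γ_min = 3β(2-ν)ξ(T)/(να)`. -/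
def gammaMin (ν : ℝ) : ℝ := 3 * C.betaC * (2 - ν) * C.xiT / (ν * C.alphaC)

/-- `γ_max = να/(2β(2-ν)μ(Ω))`. -/
def gammaMax (ν : ℝ) : ℝ := ν * C.alphaC / (2 * C.betaC * (2 - ν) * C.muOm)

/-- The `γ`-feasibility assumption: the range `[γ_min, γ_max]` is non-empty. -/
def GammaFeasible (ν : ℝ) : Prop := C.gammaMin ν ≤ C.gammaMax ν

/-- `ω = max {να/(3β(2-ν)), 1}`. -/
def omg (ν : ℝ) : ℝ := max (ν * C.alphaC / (3 * C.betaC * (2 - ν))) 1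

/-- `c₂ = 40/α + 1/‖H*‖`. -/
def c2 : ℝ := 40 / C.alphaC + 1 / C.HopNorm

/-- `c₃ = (6(2-ν)/ν + 1) c₂² ‖H*‖ ω`. -/
def c3 (ν : ℝ) : ℝ := (6 * (2 - ν) / ν + 1) * C.c2 ^ 2 * C.HopNorm * C.omg ν

/-- `c₄ = c₂ + 3αc₂²(2-ν)/(16(3-ν))`. -/
def c4 (ν : ℝ) : ℝ := C.c2 + 3 * C.alphaC * C.c2 ^ 2 * (2 - ν) / (16 * (3 - ν))

/-- `c₅ = max {c₃, c₄}`. -/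
def c5 (ν : ℝ) : ℝ := max (C.c3 ν) (C.c4 ν)

/-- `c₆ = ναc₂/(2β(2-ν))`. -/
def c6 (ν : ℝ) : ℝ := ν * C.alphaC * C.c2 / (2 * C.betaC * (2 - ν))

/-- `c₀ = 2 l(r₀) ω max{να/(2β(2-ν)), 1}²`. -/
def c0 (ν l0 : ℝ) : ℝ :=
  2 * l0 * C.omg ν * (max (ν * C.alphaC / (2 * C.betaC * (2 - ν))) 1) ^ 2

/-- `c₁ = max{1, να/(2β(2-ν))}⁻¹ r₀/2`. -/
def c1 (ν r0 : ℝ) : ℝ :=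
  (max 1 (ν * C.alphaC / (2 * C.betaC * (2 - ν))))⁻¹ * r0 / 2

/-- `s_min`, the smallest absolute value of a nonzero entry of `S*`. -/
def smin : ℝ := sInf {t | ∃ i j, C.Sstar i j ≠ 0 ∧ t = |C.Sstar i j|}

/-- `σ_min`, the smallest nonzero eigenvalue of `L*`. -/
def sigmin : ℝ := sInf {t | t ≠ 0 ∧ ∃ i, t = C.hLpsd.1.eigenvalues i}

/-- The gap assumption: `s_min ≥ c₆λ_n/μ(Ω)` and `σ_min ≥ c₅λ_n/ξ(T)²`. -/
def GapAssumption (ν lam : ℝ) : Prop :=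
  C.c6 ν * lam / C.muOm ≤ C.smin ∧ C.c5 ν * lam / C.xiT ^ 2 ≤ C.sigmin

/-- `l0` is a Lipschitz constant (in operator norm w.r.t. the spectral norm) of the
Hessian `∇²a` on the ball `{Θ : ‖Θ - Θ*‖ ≤ r0}`. -/
def HessLip (r0 l0 : ℝ) : Prop :=
  ∀ Θ Θ' : Mat d, specNorm (Θ - C.Thstar) ≤ r0 → specNorm (Θ' - C.Thstar) ≤ r0 →
    ∀ M : Mat d, specNorm (hessA Θ M - hessA Θ' M) ≤ l0 * specNorm (Θ - Θ') * specNorm M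

/-- The correct model set `M`. -/
def Mset (γ ν lam : ℝ) : Set (Mat d × Mat d) :=
  {p | p.1 ∈ C.Om ∧ p.2.IsSymm ∧ p.2.rank ≤ C.Lstar.rank ∧
    ganorm γ (C.Hop ((p.1 - C.Sstar) + (p.2 - C.Lstar)))
      (C.Hop ((p.1 - C.Sstar) + (p.2 - C.Lstar))) ≤ 9 * lam ∧
    specNorm (projPerp C.Tt (p.2 - C.Lstar)) ≤ C.xiT * lam / (C.omg ν * C.HopNorm)}

end Setup

section AuxNorm

variable {d : ℕ}

lemma minner_eq_sum (A B : Mat d) : minner A B = ∑ i, ∑ j, A i j * B i j := by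
  unfold minner Matrix.trace
  rw [Finset.sum_comm]
  simp [Matrix.diag, Matrix.mul_apply, Matrix.transpose_apply]

lemma minner_comm (A B : Mat d) : minner A B = minner B A := by
  simp only [minner_eq_sum]
  congr 1; ext i; congr 1; ext j; ring

lemma minner_add_right (A B C : Mat d) : minner A (B + C) = minner A B + minner A C := by
  simp [minner_eq_sum, Matrix.add_apply, mul_add, Finset.sum_add_distrib]

lemma minner_smul_right (A : Mat d) (c : ℝ) (B : Mat d) :
    minner A (c • B) = c * minner A B := by
  simp [minner_eq_sum, Matrix.smul_apply, Finset.mul_sum]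
  congr 1; ext i; congr 1; ext j; ring

lemma minner_zero_right (A : Mat d) : minner A (0 : Mat d) = 0 := by
  simp [minner_eq_sum]

lemma minner_zero_left (A : Mat d) : minner (0 : Mat d) A = 0 := by
  rw [minner_comm]; exact minner_zero_right A

section NInf

variable [Nonempty (Fin d)]

lemma abs_le_normInf (M : Mat d) (i j : Fin d) : |M i j| ≤ normInf M :=
  le_ciSup (f := fun p : Fin d × Fin d => |M p.1 p.2|)
    (Set.Finite.bddAbove (Set.finite_range _)) (i, j)

lemma normInf_le_of {M : Mat d} {c : ℝ} (h : ∀ i j, |M i j| ≤ c) : normInf M ≤ c :=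
  ciSup_le fun p => h p.1 p.2

lemma normInf_nonneg (M : Mat d) : 0 ≤ normInf M :=
  le_trans (abs_nonneg _) (abs_le_normInf M (Classical.arbitrary _) (Classical.arbitrary _))

lemma normInf_zero : normInf (0 : Mat d) = 0 := by
  refine le_antisymm (normInf_le_of fun i j => by simp) (normInf_nonneg 0)

lemma normInf_eq_zero {M : Mat d} (h : normInf M = 0) : M = 0 := by
  ext i j
  have := abs_le_normInf M i j
  rw [h] at this
  simpa using le_antisymm this (abs_nonneg _)

lemma normInf_add_le (M N : Mat d) : normInf (M + N) ≤ normInf M + normInf N := by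
  refine normInf_le_of fun i j => ?_
  calc |(M + N) i j| ≤ |M i j| + |N i j| := abs_add_le _ _
    _ ≤ _ := add_le_add (abs_le_normInf M i j) (abs_le_normInf N i j)

lemma normInf_smul (c : ℝ) (M : Mat d) : normInf (c • M) = |c| * normInf M := by
  rcases eq_or_ne c 0 with rfl | hc
  · simp [normInf_zero]
  · refine le_antisymm (normInf_le_of fun i j => ?_) ?_
    · rw [Matrix.smul_apply, smul_eq_mul, abs_mul]
      exact mul_le_mul_of_nonneg_left (abs_le_normInf M i j) (abs_nonneg c)
    · have h2 : normInf M ≤ |c|⁻¹ * normInf (c • M) := by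
        refine normInf_le_of fun i j => ?_
        have : |M i j| = |c|⁻¹ * |(c • M) i j| := by
          rw [Matrix.smul_apply, smul_eq_mul, abs_mul]
          field_simp
        rw [this]
        exact mul_le_mul_of_nonneg_left (abs_le_normInf _ i j) (by positivity)
      calc |c| * normInf M ≤ |c| * (|c|⁻¹ * normInf (c • M)) :=
            mul_le_mul_of_nonneg_left h2 (abs_nonneg c)
        _ = normInf (c • M) := by field_simp

lemma normInf_sub_le (M N : Mat d) : normInf (M - N) ≤ normInf M + normInf N := by
  have := normInf_add_le M (-N)
  have hn : normInf (-N) = normInf N := by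
    have := normInf_smul (-1 : ℝ) N
    simpa using this
  simpa [sub_eq_add_neg, hn] using this

end NInf

lemma vnorm_eq_norm (v : Fin d → ℝ) :
    vnorm v = ‖(WithLp.equiv 2 (Fin d → ℝ)).symm v‖ := by
  rw [EuclideanSpace.norm_eq]
  unfold vnorm
  congr 1
  refine Finset.sum_congr rfl fun i _ => ?_
  simp [Real.norm_eq_abs, sq_abs]

lemma vnorm_nonneg (v : Fin d → ℝ) : 0 ≤ vnorm v := Real.sqrt_nonneg _

lemma vnorm_zero : vnorm (0 : Fin d → ℝ) = 0 := by simp [vnorm]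

lemma vnorm_eq_zero {v : Fin d → ℝ} (h : vnorm v = 0) : v = 0 := by
  have h2 : ∑ i, v i ^ 2 = 0 := by
    have hnn : 0 ≤ ∑ i, v i ^ 2 := Finset.sum_nonneg fun i _ => sq_nonneg _
    have := Real.sqrt_eq_zero hnn |>.mp h
    exact this
  ext i
  have := (Finset.sum_eq_zero_iff_of_nonneg (fun i _ => sq_nonneg (v i))).mp h2 i (Finset.mem_univ i)
  exact pow_eq_zero_iff (by norm_num) |>.mp this

lemma vnorm_smul (c : ℝ) (v : Fin d → ℝ) : vnorm (c • v) = |c| * vnorm v := by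
  rw [vnorm_eq_norm, vnorm_eq_norm]
  have : (WithLp.equiv 2 (Fin d → ℝ)).symm (c • v) =
      c • (WithLp.equiv 2 (Fin d → ℝ)).symm v := rfl
  rw [this, norm_smul, Real.norm_eq_abs]

lemma vnorm_add_le (v w : Fin d → ℝ) : vnorm (v + w) ≤ vnorm v + vnorm w := by
  rw [vnorm_eq_norm, vnorm_eq_norm, vnorm_eq_norm]
  have : (WithLp.equiv 2 (Fin d → ℝ)).symm (v + w) =
      (WithLp.equiv 2 (Fin d → ℝ)).symm v + (WithLp.equiv 2 (Fin d → ℝ)).symm w := rfl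
  rw [this]
  exact norm_add_le _ _

lemma vnorm_sq (v : Fin d → ℝ) : vnorm v ^ 2 = ∑ i, v i ^ 2 :=
  Real.sq_sqrt (Finset.sum_nonneg fun i _ => sq_nonneg _)

/-- Frobenius norm. -/
def frobN (M : Mat d) : ℝ := Real.sqrt (∑ i, ∑ j, M i j ^ 2)

lemma frobN_nonneg (M : Mat d) : 0 ≤ frobN M := Real.sqrt_nonneg _

lemma mulVec_vnorm_le_frobN (M : Mat d) (v : Fin d → ℝ) :
    vnorm (M.mulVec v) ≤ frobN M * vnorm v := by
  have hsq : vnorm (M.mulVec v) ^ 2 ≤ (frobN M * vnorm v) ^ 2 := by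
    rw [vnorm_sq, mul_pow]
    have hf : frobN M ^ 2 = ∑ i, ∑ j, M i j ^ 2 :=
      Real.sq_sqrt (Finset.sum_nonneg fun i _ => Finset.sum_nonneg fun j _ => sq_nonneg _)
    rw [hf, vnorm_sq, Finset.sum_mul]
    refine Finset.sum_le_sum fun i _ => ?_
    have := Finset.sum_mul_sq_le_sq_mul_sq Finset.univ (fun j => M i j) v
    simpa [Matrix.mulVec, dotProduct] using this
  have h1 : 0 ≤ frobN M * vnorm v := mul_nonneg (frobN_nonneg M) (vnorm_nonneg v)
  nlinarith [vnorm_nonneg (M.mulVec v)]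

end AuxNorm

section AuxSpec

variable {d : ℕ}

lemma specNorm_bddAbove (M : Mat d) :
    BddAbove {t | ∃ v : Fin d → ℝ, vnorm v ≤ 1 ∧ t = vnorm (M.mulVec v)} := by
  refine ⟨frobN M, ?_⟩
  rintro t ⟨v, hv, rfl⟩
  calc vnorm (M.mulVec v) ≤ frobN M * vnorm v := mulVec_vnorm_le_frobN M v
    _ ≤ frobN M * 1 := by
        exact mul_le_mul_of_nonneg_left hv (frobN_nonneg M)
    _ = frobN M := mul_one _

lemma specNorm_set_nonempty (M : Mat d) :
    Set.Nonempty {t | ∃ v : Fin d → ℝ, vnorm v ≤ 1 ∧ t = vnorm (M.mulVec v)} :=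
  ⟨vnorm (M.mulVec 0), 0, by simp [vnorm_zero], rfl⟩

lemma vnorm_mulVec_le_specNorm {M : Mat d} {v : Fin d → ℝ} (hv : vnorm v ≤ 1) :
    vnorm (M.mulVec v) ≤ specNorm M :=
  le_csSup (specNorm_bddAbove M) ⟨v, hv, rfl⟩

lemma specNorm_nonneg (M : Mat d) : 0 ≤ specNorm M := by
  have : vnorm (M.mulVec 0) ≤ specNorm M :=
    vnorm_mulVec_le_specNorm (by simp [vnorm_zero])
  simpa [Matrix.mulVec_zero, vnorm_zero] using this

lemma specNorm_le_of {M : Mat d} {c : ℝ}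
    (h : ∀ v : Fin d → ℝ, vnorm v ≤ 1 → vnorm (M.mulVec v) ≤ c) : specNorm M ≤ c := by
  refine csSup_le (specNorm_set_nonempty M) ?_
  rintro t ⟨v, hv, rfl⟩
  exact h v hv

lemma vnorm_mulVec_le (M : Mat d) (v : Fin d → ℝ) :
    vnorm (M.mulVec v) ≤ specNorm M * vnorm v := by
  rcases eq_or_ne (vnorm v) 0 with h0 | h0
  · have : v = 0 := vnorm_eq_zero h0
    subst this
    simp [Matrix.mulVec_zero, vnorm_zero, h0]
  · have hpos : 0 < vnorm v := lt_of_le_of_ne (vnorm_nonneg v) (Ne.symm h0)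
    have h1 : vnorm ((vnorm v)⁻¹ • v) ≤ 1 := by
      rw [vnorm_smul, abs_of_nonneg (by positivity)]
      rw [inv_mul_cancel₀ h0]
    have h2 := vnorm_mulVec_le_specNorm (M := M) h1
    rw [Matrix.mulVec_smul, vnorm_smul, abs_of_nonneg (by positivity)] at h2
    calc vnorm (M.mulVec v) = vnorm v * ((vnorm v)⁻¹ * vnorm (M.mulVec v)) := by
          field_simp
      _ ≤ vnorm v * specNorm M := mul_le_mul_of_nonneg_left h2 (le_of_lt hpos)
      _ = specNorm M * vnorm v := mul_comm _ _

lemma specNorm_le_frobN (M : Mat d) : specNorm M ≤ frobN M := by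
  refine specNorm_le_of fun v hv => ?_
  calc vnorm (M.mulVec v) ≤ frobN M * vnorm v := mulVec_vnorm_le_frobN M v
    _ ≤ frobN M * 1 := mul_le_mul_of_nonneg_left hv (frobN_nonneg M)
    _ = frobN M := mul_one _

lemma specNorm_add_le (M N : Mat d) : specNorm (M + N) ≤ specNorm M + specNorm N := by
  refine specNorm_le_of fun v hv => ?_
  rw [Matrix.add_mulVec]
  calc vnorm (M.mulVec v + N.mulVec v) ≤ vnorm (M.mulVec v) + vnorm (N.mulVec v) :=
        vnorm_add_le _ _
    _ ≤ specNorm M + specNorm N :=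
        add_le_add (vnorm_mulVec_le_specNorm hv) (vnorm_mulVec_le_specNorm hv)

lemma specNorm_zero : specNorm (0 : Mat d) = 0 := by
  refine le_antisymm (specNorm_le_of fun v hv => by simp [Matrix.zero_mulVec, vnorm_zero])
    (specNorm_nonneg 0)

lemma specNorm_smul (c : ℝ) (M : Mat d) : specNorm (c • M) = |c| * specNorm M := by
  rcases eq_or_ne c 0 with rfl | hc
  · simp [specNorm_zero]
  · refine le_antisymm (specNorm_le_of fun v hv => ?_) ?_
    · rw [Matrix.smul_mulVec, vnorm_smul]
      exact mul_le_mul_of_nonneg_left (vnorm_mulVec_le_specNorm hv) (abs_nonneg c)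
    · have h2 : specNorm M ≤ |c|⁻¹ * specNorm (c • M) := by
        refine specNorm_le_of fun v hv => ?_
        have : vnorm (M.mulVec v) = |c|⁻¹ * vnorm ((c • M).mulVec v) := by
          rw [Matrix.smul_mulVec, vnorm_smul]
          field_simp
        rw [this]
        exact mul_le_mul_of_nonneg_left (vnorm_mulVec_le_specNorm hv) (by positivity)
      calc |c| * specNorm M ≤ |c| * (|c|⁻¹ * specNorm (c • M)) :=
            mul_le_mul_of_nonneg_left h2 (abs_nonneg c)
        _ = specNorm (c • M) := by field_simp

lemma specNorm_neg (M : Mat d) : specNorm (-M) = specNorm M := by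
  have := specNorm_smul (-1 : ℝ) M
  simpa using this

lemma specNorm_sub_le (M N : Mat d) : specNorm (M - N) ≤ specNorm M + specNorm N := by
  have := specNorm_add_le M (-N)
  simpa [sub_eq_add_neg, specNorm_neg] using this

lemma vnorm_single (j : Fin d) : vnorm (Pi.single j (1:ℝ)) = 1 := by
  unfold vnorm
  have : ∑ i, ((Pi.single j (1:ℝ) : Fin d → ℝ) i) ^ 2 = 1 := by
    rw [Finset.sum_eq_single j]
    · simp
    · intro b _ hb; simp [Pi.single_apply, hb]
    · intro h; exact absurd (Finset.mem_univ j) h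
  rw [this, Real.sqrt_one]

lemma abs_le_specNorm (M : Mat d) (i j : Fin d) : |M i j| ≤ specNorm M := by
  have h1 : vnorm (M.mulVec (Pi.single j 1)) ≤ specNorm M :=
    vnorm_mulVec_le_specNorm (le_of_eq (vnorm_single j))
  refine le_trans ?_ h1
  have hcol : M.mulVec (Pi.single j (1:ℝ)) = fun i' => M i' j := by
    ext i'
    simp [Matrix.mulVec_single]
  rw [hcol]
  unfold vnorm
  have h2 : |M i j| = Real.sqrt (M i j ^ 2) := (Real.sqrt_sq_eq_abs _).symm
  rw [h2]
  refine Real.sqrt_le_sqrt ?_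
  exact Finset.single_le_sum (fun k _ => sq_nonneg (M k j)) (Finset.mem_univ i)

lemma normInf_le_specNorm [Nonempty (Fin d)] (M : Mat d) : normInf M ≤ specNorm M :=
  normInf_le_of fun i j => abs_le_specNorm M i j

lemma specNorm_eq_zero {M : Mat d} (h : specNorm M = 0) : M = 0 := by
  ext i j
  have := abs_le_specNorm M i j
  rw [h] at this
  simpa using le_antisymm this (abs_nonneg _)

lemma frobN_le_normInf [Nonempty (Fin d)] (M : Mat d) : frobN M ≤ d * normInf M := by
  unfold frobN
  have hb : ∑ i, ∑ j, M i j ^ 2 ≤ ∑ i : Fin d, ∑ j : Fin d, normInf M ^ 2 := by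
    refine Finset.sum_le_sum fun i _ => Finset.sum_le_sum fun j _ => ?_
    nlinarith [abs_nonneg (M i j), abs_le_normInf M i j, sq_abs (M i j)]
  refine le_trans (Real.sqrt_le_sqrt hb) ?_
  have h1 : ∑ i : Fin d, ∑ j : Fin d, normInf M ^ 2 = (d:ℝ)^2 * normInf M ^ 2 := by
    simp [Finset.sum_const]
    ring
  rw [h1]
  rw [show (d:ℝ)^2 * normInf M ^2 = (d * normInf M)^2 by ring]
  rw [Real.sqrt_sq (mul_nonneg (by positivity) (normInf_nonneg M))]

lemma specNorm_le_d_mul_normInf [Nonempty (Fin d)] (M : Mat d) : specNorm M ≤ d * normInf M :=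
  le_trans (specNorm_le_frobN M) (frobN_le_normInf M)

end AuxSpec

section AuxProj

variable {d : ℕ}

lemma matEuclid_inner (A B : Mat d) :
    (inner ℝ ((matEuclid d) A) ((matEuclid d) B) : ℝ) = minner A B := by
  rw [minner_eq_sum]
  rw [PiLp.inner_apply]
  simp only [RCLike.inner_apply, starRingEnd_apply, star_trivial]
  rw [Fintype.sum_prod_type]
  exact Finset.sum_congr rfl fun i _ => Finset.sum_congr rfl fun j _ => mul_comm _ _

lemma proj_mem (V : Submodule ℝ (Mat d)) (X : Mat d) : proj V X ∈ V := by
  unfold proj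
  obtain ⟨m, hm, hme⟩ := Submodule.coe_mem
    (Submodule.orthogonalProjectionOnto (V.map ((matEuclid d) : Mat d →ₗ[ℝ] EuclideanSpace ℝ (Fin d × Fin d)))
      ((matEuclid d) X))
  rw [← hme]
  rw [show ((matEuclid d) : Mat d →ₗ[ℝ] EuclideanSpace ℝ (Fin d × Fin d)) m = (matEuclid d) m
    from rfl, (matEuclid d).symm_apply_apply]
  exact hm

lemma proj_eq_of {V : Submodule ℝ (Mat d)} {X P : Mat d} (hP : P ∈ V)
    (h : ∀ N ∈ V, minner (X - P) N = 0) : proj V X = P := by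
  unfold proj
  set f := ((matEuclid d) : Mat d →ₗ[ℝ] EuclideanSpace ℝ (Fin d × Fin d)) with hf
  set K := V.map f with hK
  have h1 : (Submodule.orthogonalProjectionOnto K ((matEuclid d) X) : EuclideanSpace ℝ (Fin d × Fin d)) =
      (matEuclid d) P := by
    refine Submodule.eq_starProjection_of_mem_of_inner_eq_zero ?_ ?_
    · exact ⟨P, hP, rfl⟩
    · rintro w ⟨N, hN, rfl⟩
      have : (matEuclid d) X - (matEuclid d) P = (matEuclid d) (X - P) := by
        rw [map_sub]
      rw [this]
      rw [show f N = (matEuclid d) N from rfl]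
      rw [matEuclid_inner]
      exact h N hN
  rw [h1, (matEuclid d).symm_apply_apply]

lemma proj_eq_self {V : Submodule ℝ (Mat d)} {X : Mat d} (hX : X ∈ V) : proj V X = X :=
  proj_eq_of hX (fun N _ => by rw [sub_self]; exact minner_zero_left N)

lemma proj_add (V : Submodule ℝ (Mat d)) (X Y : Mat d) :
    proj V (X + Y) = proj V X + proj V Y := by
  unfold proj
  simp only [map_add, Submodule.coe_add]

lemma proj_smul (V : Submodule ℝ (Mat d)) (c : ℝ) (X : Mat d) :
    proj V (c • X) = c • proj V X := by
  unfold proj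
  simp only [_root_.map_smul, Submodule.coe_smul, SetLike.val_smul]

lemma proj_zero (V : Submodule ℝ (Mat d)) : proj V (0 : Mat d) = 0 :=
  proj_eq_self (Submodule.zero_mem V)

lemma frobN_eq_norm (M : Mat d) : frobN M = ‖(matEuclid d) M‖ := by
  rw [EuclideanSpace.norm_eq]
  unfold frobN
  congr 1
  rw [Fintype.sum_prod_type]
  refine Finset.sum_congr rfl fun i _ => Finset.sum_congr rfl fun j _ => ?_
  have h : (matEuclid d) M (i, j) = M i j := rfl
  rw [h, Real.norm_eq_abs, sq_abs]

lemma frobN_proj_le (V : Submodule ℝ (Mat d)) (X : Mat d) : frobN (proj V X) ≤ frobN X := by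
  rw [frobN_eq_norm, frobN_eq_norm]
  unfold proj
  rw [(matEuclid d).apply_symm_apply]
  set K := V.map ((matEuclid d) : Mat d →ₗ[ℝ] EuclideanSpace ℝ (Fin d × Fin d))
  set u := (matEuclid d) X
  have h1 : ‖u - (Submodule.orthogonalProjectionOnto K u : EuclideanSpace ℝ (Fin d × Fin d))‖ ^ 2 +
      ‖(Submodule.orthogonalProjectionOnto K u : EuclideanSpace ℝ (Fin d × Fin d))‖ ^ 2 = ‖u‖ ^ 2 := by
    have horth : (inner ℝ (u - (Submodule.orthogonalProjectionOnto K u : EuclideanSpace ℝ (Fin d × Fin d)))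
        ((Submodule.orthogonalProjectionOnto K u : EuclideanSpace ℝ (Fin d × Fin d))) : ℝ) = 0 :=
      Submodule.starProjection_inner_eq_zero u _ (Submodule.coe_mem _)
    have := norm_add_sq_real (u - (Submodule.orthogonalProjectionOnto K u : EuclideanSpace ℝ (Fin d × Fin d)))
      ((Submodule.orthogonalProjectionOnto K u : EuclideanSpace ℝ (Fin d × Fin d)))
    rw [horth] at this
    simp at this
    simp only [Submodule.coe_orthogonalProjectionOnto_apply]
    linarith [this]
  nlinarith [norm_nonneg (u - (Submodule.orthogonalProjectionOnto K u : EuclideanSpace ℝ (Fin d × Fin d))),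
    norm_nonneg ((Submodule.orthogonalProjectionOnto K u : EuclideanSpace ℝ (Fin d × Fin d))),
    norm_nonneg u, sq_nonneg (‖u - (Submodule.orthogonalProjectionOnto K u : EuclideanSpace ℝ (Fin d × Fin d))‖)]

lemma normInf_le_frobN [Nonempty (Fin d)] (M : Mat d) : normInf M ≤ frobN M := by
  refine normInf_le_of fun i j => ?_
  rw [← Real.sqrt_sq_eq_abs]
  unfold frobN
  refine Real.sqrt_le_sqrt ?_
  calc M i j ^ 2 ≤ ∑ j', M i j' ^ 2 :=
        Finset.single_le_sum (fun k _ => sq_nonneg (M i k)) (Finset.mem_univ j)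
    _ ≤ ∑ i', ∑ j', M i' j' ^ 2 :=
        Finset.single_le_sum (f := fun i' => ∑ j', M i' j' ^ 2)
          (fun k _ => Finset.sum_nonneg fun l _ => sq_nonneg _) (Finset.mem_univ i)

lemma specNorm_proj_le [Nonempty (Fin d)] (V : Submodule ℝ (Mat d)) (X : Mat d) :
    specNorm (proj V X) ≤ d * specNorm X := by
  calc specNorm (proj V X) ≤ frobN (proj V X) := specNorm_le_frobN _
    _ ≤ frobN X := frobN_proj_le V X
    _ ≤ d * normInf X := frobN_le_normInf X
    _ ≤ d * specNorm X := by
        exact mul_le_mul_of_nonneg_left (normInf_le_specNorm X) (by positivity)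

lemma normInf_proj_le_frobN [Nonempty (Fin d)] (V : Submodule ℝ (Mat d)) (X : Mat d) :
    normInf (proj V X) ≤ frobN X :=
  le_trans (normInf_le_frobN _) (frobN_proj_le V X)

end AuxProj

section AuxOm

variable {d : ℕ}

lemma proj_OmegaS {S : Mat d} (hS : S.IsSymm) (X : Mat d) :
    proj (OmegaS S) X =
      Matrix.of fun i j => if S i j = 0 then 0 else (X i j + X j i) / 2 := by
  have hSapp : ∀ i j, S j i = S i j := fun i j => hS.apply i j
  refine proj_eq_of ⟨?_, ?_⟩ ?_
  · show (Matrix.of fun i j => if S i j = 0 then 0 else (X i j + X j i) / 2)ᵀ = _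
    ext i j
    simp only [Matrix.transpose_apply, Matrix.of_apply]
    rw [hSapp i j]
    rcases eq_or_ne (S i j) 0 with h | h
    · simp [h]
    · simp only [if_neg h]; ring
  · intro i j h
    simp [Matrix.of_apply, h]
  · rintro N ⟨hNs, hN0⟩
    rw [minner_eq_sum]
    set f : Fin d → Fin d → ℝ := fun i j =>
      (X - Matrix.of fun i j => if S i j = 0 then 0 else (X i j + X j i) / 2) i j * N i j
      with hf
    have hNapp : ∀ i j, N j i = N i j := fun i j => hNs.apply i j
    have hanti : ∀ i j, f i j + f j i = 0 := by
      intro i j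
      rcases eq_or_ne (S i j) 0 with h | h
      · have h' : S j i = 0 := by rw [hSapp i j]; exact h
        simp [hf, hN0 i j h, hN0 j i h']
      · have h' : S j i ≠ 0 := by rw [hSapp i j]; exact h
        simp only [hf, Matrix.sub_apply, Matrix.of_apply, if_neg h, if_neg h']
        rw [hNapp i j]
        ring
    have hdouble : (∑ i, ∑ j, f i j) + (∑ i, ∑ j, f i j) = 0 := by
      nth_rewrite 2 [Finset.sum_comm]
      rw [← Finset.sum_add_distrib]
      refine Finset.sum_eq_zero fun i _ => ?_
      rw [← Finset.sum_add_distrib]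
      exact Finset.sum_eq_zero fun j _ => hanti i j
    linarith [hdouble]

lemma normInf_proj_OmegaS_le [Nonempty (Fin d)] {S : Mat d} (hS : S.IsSymm) (X : Mat d) :
    normInf (proj (OmegaS S) X) ≤ normInf X := by
  rw [proj_OmegaS hS]
  refine normInf_le_of fun i j => ?_
  simp only [Matrix.of_apply]
  have h1 := abs_le_normInf X i j
  have h2 := abs_le_normInf X j i
  rcases eq_or_ne (S i j) 0 with h | h
  · simp [h, normInf_nonneg X]
  · rw [if_neg h]
    have habs : |X i j + X j i| ≤ |X i j| + |X j i| := abs_add_le _ _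
    have heq : |(X i j + X j i) / 2| = |X i j + X j i| / 2 := by
      rw [abs_div, abs_two]
    rw [heq]; linarith

lemma normInf_projPerp_OmegaS_le [Nonempty (Fin d)] {S : Mat d} (hS : S.IsSymm) (X : Mat d) :
    normInf (projPerp (OmegaS S) X) ≤ normInf X := by
  unfold projPerp
  rw [proj_OmegaS hS]
  refine normInf_le_of fun i j => ?_
  simp only [Matrix.sub_apply, Matrix.of_apply]
  have h1 := abs_le_normInf X i j
  have h2 := abs_le_normInf X j i
  rcases eq_or_ne (S i j) 0 with h | h
  · rw [if_pos h, sub_zero]; exact h1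
  · rw [if_neg h]
    have heq : X i j - (X i j + X j i) / 2 = (X i j - X j i) / 2 := by ring
    rw [heq]
    have habs : |X i j - X j i| ≤ |X i j| + |X j i| := by
      calc |X i j - X j i| = |X i j + -(X j i)| := by rw [sub_eq_add_neg]
        _ ≤ |X i j| + |-(X j i)| := abs_add_le _ _
        _ = |X i j| + |X j i| := by rw [abs_neg]
    have heq2 : |(X i j - X j i) / 2| = |X i j - X j i| / 2 := by rw [abs_div, abs_two]
    rw [heq2]; linarith

end AuxOm

section AuxT

variable {d r : ℕ} {U : Matrix (Fin d) (Fin r) ℝ}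

lemma TSpace_symm {N : Mat d} (hN : N ∈ TSpace U) : Nᵀ = N := by
  obtain ⟨Y, rfl⟩ := hN
  rw [Matrix.transpose_add, Matrix.transpose_mul, Matrix.transpose_mul,
    Matrix.transpose_transpose, Matrix.transpose_transpose]
  abel

lemma hPU_mul (hU : Uᵀ * U = 1) : (U * Uᵀ) * U = U := by
  rw [Matrix.mul_assoc, hU, Matrix.mul_one]

lemma hUP_mul (hU : Uᵀ * U = 1) : Uᵀ * (U * Uᵀ) = Uᵀ := by
  rw [← Matrix.mul_assoc, hU, Matrix.one_mul]

lemma proj_TSpace_symm (hU : Uᵀ * U = 1) {X : Mat d} (hX : Xᵀ = X) :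
    proj (TSpace U) X =
      (U * Uᵀ) * X + X * (U * Uᵀ) - (U * Uᵀ) * X * (U * Uᵀ) := by
  refine proj_eq_of ?_ ?_
  · refine ⟨X * U - (2⁻¹ : ℝ) • (U * (Uᵀ * (X * U))), ?_⟩
    simp only [Matrix.transpose_sub, Matrix.transpose_smul, Matrix.transpose_mul,
      Matrix.transpose_transpose, hX, Matrix.mul_sub, Matrix.sub_mul, Matrix.mul_smul,
      Matrix.smul_mul, Matrix.mul_assoc]
    rw [sub_add_sub_comm, ← add_smul]
    norm_num
  · rintro N ⟨Y, rfl⟩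
    set R : Mat d := X - ((U * Uᵀ) * X + X * (U * Uᵀ) - (U * Uᵀ) * X * (U * Uᵀ)) with hR
    have hRU : R * U = 0 := by
      rw [hR]
      simp only [Matrix.sub_mul, Matrix.add_mul, Matrix.mul_assoc, hU, Matrix.mul_one]
      abel
    have hRT : Rᵀ = R := by
      rw [hR]
      simp only [Matrix.transpose_sub, Matrix.transpose_add, Matrix.transpose_mul,
        Matrix.transpose_transpose, hX, Matrix.mul_assoc]
      abel
    have hUR : Uᵀ * R = 0 := by
      have h0 : (R * U)ᵀ = 0 := by rw [hRU, Matrix.transpose_zero]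
      rw [Matrix.transpose_mul, hRT] at h0
      exact h0
    show minner R (U * Yᵀ + Y * Uᵀ) = 0
    unfold minner
    rw [hRT]
    rw [Matrix.mul_add, Matrix.trace_add]
    have t1 : R * (U * Yᵀ) = 0 := by rw [← Matrix.mul_assoc, hRU, Matrix.zero_mul]
    have t2 : (R * (Y * Uᵀ)).trace = 0 := by
      rw [Matrix.trace_mul_comm, Matrix.mul_assoc, hUR, Matrix.mul_zero, Matrix.trace_zero]
    rw [t1, Matrix.trace_zero, t2, add_zero]

lemma Qvec_contract (hU : Uᵀ * U = 1) (v : Fin d → ℝ) :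
    vnorm (((1 : Mat d) - U * Uᵀ).mulVec v) ≤ vnorm v := by
  set P : Mat d := U * Uᵀ with hP
  set Q : Mat d := 1 - P with hQ
  have hPT : Pᵀ = P := by rw [hP, Matrix.transpose_mul, Matrix.transpose_transpose]
  have hQT : Qᵀ = Q := by rw [hQ, Matrix.transpose_sub, Matrix.transpose_one, hPT]
  have hPP : P * P = P := by
    rw [hP, Matrix.mul_assoc, ← Matrix.mul_assoc Uᵀ U Uᵀ, hU, Matrix.one_mul]
  have hQQ : Q * Q = Q := by
    rw [hQ, Matrix.sub_mul, Matrix.mul_sub, Matrix.mul_sub, Matrix.one_mul, Matrix.mul_one,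
      Matrix.one_mul, hPP]
    abel
  set w := Q.mulVec v with hw
  have key : w ⬝ᵥ w = w ⬝ᵥ v := by
    nth_rewrite 2 [hw]
    rw [dotProduct_mulVec]
    congr 1
    show w ᵥ* Q = w
    rw [← Matrix.mulVec_transpose Q w, hQT, hw, Matrix.mulVec_mulVec, hQQ]
  have hws : vnorm w ^ 2 = w ⬝ᵥ w := by
    rw [vnorm_sq]
    unfold dotProduct
    exact Finset.sum_congr rfl fun i _ => sq (w i) ▸ (pow_two (w i))
  have hcs : (w ⬝ᵥ v) ^ 2 ≤ (∑ i, w i ^ 2) * ∑ i, v i ^ 2 := by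
    unfold dotProduct
    exact Finset.sum_mul_sq_le_sq_mul_sq Finset.univ w v
  rw [← vnorm_sq, ← vnorm_sq] at hcs
  have hws' : vnorm w ^ 2 = w ⬝ᵥ v := hws.trans key
  by_contra hlt
  push_neg at hlt
  have h1 : 0 < vnorm w := lt_of_le_of_lt (vnorm_nonneg v) hlt
  have h2 : vnorm w ^ 2 * vnorm w ^ 2 ≤ vnorm w ^ 2 * vnorm v ^ 2 := by
    calc vnorm w ^ 2 * vnorm w ^ 2 = (w ⬝ᵥ v) ^ 2 := by rw [← hws']; ring
      _ ≤ vnorm w ^ 2 * vnorm v ^ 2 := hcs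
  have h3 : vnorm w ^ 2 ≤ vnorm v ^ 2 := le_of_mul_le_mul_left h2 (pow_pos h1 2)
  have h4 : 0 < (vnorm w - vnorm v) * (vnorm w + vnorm v) :=
    mul_pos (by linarith) (by linarith [vnorm_nonneg v])
  nlinarith [h3, h4]

lemma specNorm_QXQ_le (hU : Uᵀ * U = 1) (X : Mat d) :
    specNorm (((1 : Mat d) - U * Uᵀ) * X * ((1 : Mat d) - U * Uᵀ)) ≤ specNorm X := by
  refine specNorm_le_of fun v hv => ?_
  rw [← Matrix.mulVec_mulVec, ← Matrix.mulVec_mulVec]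
  calc vnorm (((1 : Mat d) - U * Uᵀ).mulVec (X.mulVec (((1 : Mat d) - U * Uᵀ).mulVec v)))
      ≤ vnorm (X.mulVec (((1 : Mat d) - U * Uᵀ).mulVec v)) := Qvec_contract hU _
    _ ≤ specNorm X * vnorm (((1 : Mat d) - U * Uᵀ).mulVec v) := vnorm_mulVec_le _ _
    _ ≤ specNorm X * vnorm v := by
        exact mul_le_mul_of_nonneg_left (Qvec_contract hU v) (specNorm_nonneg X)
    _ ≤ specNorm X * 1 := mul_le_mul_of_nonneg_left hv (specNorm_nonneg X)
    _ = specNorm X := mul_one _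

lemma projPerp_TSpace_symm (hU : Uᵀ * U = 1) {X : Mat d} (hX : Xᵀ = X) :
    projPerp (TSpace U) X =
      ((1 : Mat d) - U * Uᵀ) * X * ((1 : Mat d) - U * Uᵀ) := by
  unfold projPerp
  rw [proj_TSpace_symm hU hX]
  noncomm_ring

lemma specNorm_projPerp_TSpace_le (hU : Uᵀ * U = 1) {X : Mat d} (hX : Xᵀ = X) :
    specNorm (projPerp (TSpace U) X) ≤ specNorm X := by
  rw [projPerp_TSpace_symm hU hX]
  exact specNorm_QXQ_le hU X

lemma specNorm_proj_TSpace_le (hU : Uᵀ * U = 1) {X : Mat d} (hX : Xᵀ = X) :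
    specNorm (proj (TSpace U) X) ≤ 2 * specNorm X := by
  have hdecomp : proj (TSpace U) X = X - projPerp (TSpace U) X := by
    unfold projPerp; abel
  rw [hdecomp]
  calc specNorm (X - projPerp (TSpace U) X) ≤
      specNorm X + specNorm (projPerp (TSpace U) X) := specNorm_sub_le _ _
    _ ≤ specNorm X + specNorm X :=
        add_le_add le_rfl (specNorm_projPerp_TSpace_le hU hX)
    _ = 2 * specNorm X := by ring

end AuxT

section AuxHess

variable {d : ℕ}

lemma minner_sub_right (A B C : Mat d) : minner A (B - C) = minner A B - minner A C := by
  simp [minner_eq_sum, Matrix.sub_apply, mul_sub, Finset.sum_sub_distrib]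

lemma minner_sum_right {ι : Type*} (A : Mat d) (s : Finset ι) (f : ι → Mat d) :
    minner A (∑ i ∈ s, f i) = ∑ i ∈ s, minner A (f i) := by
  classical
  induction s using Finset.cons_induction with
  | empty => simp [minner_zero_right]
  | cons a s ha ih =>
    rw [Finset.sum_cons, Finset.sum_cons, minner_add_right, ih]

lemma hessA_add (Θ M N : Mat d) : hessA Θ (M + N) = hessA Θ M + hessA Θ N := by
  unfold hessA
  simp only [minner_add_right, mul_add, add_smul, Finset.sum_add_distrib]
  abel

lemma hessA_smul (Θ : Mat d) (c : ℝ) (M : Mat d) : hessA Θ (c • M) = c • hessA Θ M := by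
  unfold hessA
  rw [smul_sub, Finset.smul_sum]
  congr 1
  · refine Finset.sum_congr rfl fun x _ => ?_
    rw [minner_smul_right, smul_smul]
    congr 1
    ring
  · rw [minner_smul_right, smul_smul]

/-- The Hessian as a linear map. -/
def hessL (Θ : Mat d) : Mat d →ₗ[ℝ] Mat d where
  toFun := hessA Θ
  map_add' := hessA_add Θ
  map_smul' := fun c M => hessA_smul Θ c M

lemma hessA_zero (Θ : Mat d) : hessA Θ (0 : Mat d) = 0 := by
  have := hessA_smul Θ 0 0
  simpa using this

lemma phi_transpose (x : Fin d → Bool) : (phi x)ᵀ = phi x := by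
  ext i j
  simp [phi, Matrix.transpose_apply, mul_comm]

lemma meanPhi_transpose (Θ : Mat d) : (meanPhi Θ)ᵀ = meanPhi Θ := by
  unfold meanPhi
  rw [Matrix.transpose_sum]
  refine Finset.sum_congr rfl fun x _ => ?_
  rw [Matrix.transpose_smul, phi_transpose]

lemma hessA_transpose (Θ M : Mat d) : (hessA Θ M)ᵀ = hessA Θ M := by
  unfold hessA
  rw [Matrix.transpose_sub, Matrix.transpose_sum, Matrix.transpose_smul, meanPhi_transpose]
  congr 1
  refine Finset.sum_congr rfl fun x _ => ?_
  rw [Matrix.transpose_smul, phi_transpose]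

lemma sum_isingPMF (Θ : Mat d) : ∑ x : Fin d → Bool, isingPMF Θ x = 1 := by
  unfold isingPMF logA
  have hpos : 0 < ∑ x : Fin d → Bool, Real.exp (minner Θ (phi x)) :=
    Finset.sum_pos (fun x _ => Real.exp_pos _) ⟨fun _ => false, Finset.mem_univ _⟩
  simp only [Real.exp_sub]
  rw [← Finset.sum_div, Real.exp_log hpos]
  exact div_self (ne_of_gt hpos)

lemma isingPMF_pos (Θ : Mat d) (x : Fin d → Bool) : 0 < isingPMF Θ x := Real.exp_pos _

lemma hessA_ne_zero_of {Θ M : Mat d} (hsym : M.IsSymm) (hM : M ≠ 0) : hessA Θ M ≠ 0 := by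
  intro h0
  set p : (Fin d → Bool) → ℝ := isingPMF Θ with hp
  set c : (Fin d → Bool) → ℝ := fun x => minner (phi x) M with hc
  set m : ℝ := ∑ x : Fin d → Bool, p x * c x with hm
  have hmean : minner M (meanPhi Θ) = m := by
    unfold meanPhi
    rw [minner_sum_right, hm]
    refine Finset.sum_congr rfl fun x _ => ?_
    rw [minner_smul_right, hc]
    rw [minner_comm]
  have hq : minner M (hessA Θ M) = (∑ x : Fin d → Bool, p x * c x ^ 2) - m * m := by
    unfold hessA
    rw [minner_sub_right, minner_sum_right, minner_smul_right, hmean]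
    congr 1
    · refine Finset.sum_congr rfl fun x _ => ?_
      rw [minner_smul_right]
      have : minner M (phi x) = c x := by rw [hc, minner_comm]
      rw [this, hc]
      ring
    · rw [minner_comm (meanPhi Θ) M, hmean]
  have hq2 : (∑ x : Fin d → Bool, p x * (c x - m) ^ 2) = minner M (hessA Θ M) := by
    rw [hq]
    have hexp : ∀ x : Fin d → Bool, p x * (c x - m) ^ 2 =
        p x * c x ^ 2 - 2 * m * (p x * c x) + m ^ 2 * p x := by
      intro x; ring
    rw [Finset.sum_congr rfl fun x _ => hexp x]
    rw [Finset.sum_add_distrib, Finset.sum_sub_distrib, ← Finset.mul_sum, ← Finset.mul_sum]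
    rw [← hm, hp, sum_isingPMF]
    ring
  rw [h0, minner_zero_right] at hq2
  have hall : ∀ x : Fin d → Bool, c x = m := by
    intro x
    have hterm := (Finset.sum_eq_zero_iff_of_nonneg
      (fun y _ => mul_nonneg (le_of_lt (isingPMF_pos Θ y)) (sq_nonneg (c y - m)))).mp
      hq2 x (Finset.mem_univ x)
    have hpx := isingPMF_pos Θ x
    have : (c x - m) ^ 2 = 0 := by
      by_contra hne
      have : 0 < (c x - m)^2 := lt_of_le_of_ne (sq_nonneg _) (Ne.symm hne)
      nlinarith [hterm, hpx, this]
    have := pow_eq_zero_iff (n := 2) (by norm_num) |>.mp this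
    linarith [sub_eq_zero.mp this]
  have hphi0 : phi (fun _ => false) = (0 : Mat d) := by
    ext i j; simp [phi, b2r]
  have hm0 : m = 0 := by
    have h : minner (phi (fun _ => false)) M = m := hall (fun _ => false)
    rw [hphi0, minner_zero_left] at h
    exact h.symm
  have hall0 : ∀ x : Fin d → Bool, minner (phi x) M = 0 := by
    intro x
    have h : minner (phi x) M = m := hall x
    rw [h, hm0]
  have hsum : ∀ u w : Fin d,
      (∑ a, ∑ b, (if a = u then (1:ℝ) else 0) * ((if b = w then (1:ℝ) else 0) * M a b))
        = M u w := by
    intro u w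
    rw [Finset.sum_eq_single u]
    · rw [if_pos rfl, Finset.sum_eq_single w]
      · rw [if_pos rfl]; ring
      · intro b _ hb; rw [if_neg hb]; ring
      · intro hh; exact absurd (Finset.mem_univ w) hh
    · intro a _ ha
      refine Finset.sum_eq_zero fun b _ => ?_
      rw [if_neg ha]; ring
    · intro hh; exact absurd (Finset.mem_univ u) hh
  have hdiag : ∀ i, M i i = 0 := by
    intro i
    have h := hall0 (fun k => decide (k = i))
    rw [minner_eq_sum] at h
    have hentry : ∀ a b : Fin d, phi (fun k => decide (k = i)) a b * M a b =
        (if a = i then (1:ℝ) else 0) * ((if b = i then (1:ℝ) else 0) * M a b) := by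
      intro a b
      simp only [phi, Matrix.of_apply, b2r, decide_eq_true_eq]
      ring
    rw [Finset.sum_congr rfl fun a _ => Finset.sum_congr rfl fun b _ => hentry a b] at h
    rw [hsum i i] at h
    exact h
  have hoff : ∀ i j, M i j = 0 := by
    intro i j
    rcases eq_or_ne i j with rfl | hij
    · exact hdiag i
    · have h := hall0 (fun k => decide (k = i) || decide (k = j))
      rw [minner_eq_sum] at h
      have hb2r : ∀ k, b2r (fun k => decide (k = i) || decide (k = j)) k =
          (if k = i then (1:ℝ) else 0) + (if k = j then 1 else 0) := by
        intro k
        by_cases h1 : k = i <;> by_cases h2 : k = j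
        · exact absurd (h1 ▸ h2) hij
        · simp [b2r, h1, h2, hij, Ne.symm hij]
        · simp [b2r, h1, h2, hij, Ne.symm hij]
        · simp [b2r, h1, h2, hij, Ne.symm hij]
      have hentry : ∀ a b : Fin d, phi (fun k => decide (k = i) || decide (k = j)) a b * M a b =
          (if a = i then (1:ℝ) else 0) * ((if b = i then (1:ℝ) else 0) * M a b) +
          (if a = i then (1:ℝ) else 0) * ((if b = j then (1:ℝ) else 0) * M a b) +
          ((if a = j then (1:ℝ) else 0) * ((if b = i then (1:ℝ) else 0) * M a b) +
           (if a = j then (1:ℝ) else 0) * ((if b = j then (1:ℝ) else 0) * M a b)) := by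
        intro a b
        simp only [phi, Matrix.of_apply, hb2r]
        ring
      rw [Finset.sum_congr rfl fun a _ => Finset.sum_congr rfl fun b _ => hentry a b] at h
      simp only [Finset.sum_add_distrib] at h
      rw [hsum i i, hsum i j, hsum j i, hsum j j] at h
      have hsymm : M j i = M i j := hsym.apply i j
      rw [hdiag i, hdiag j, hsymm] at h
      linarith
  exact hM (by ext i j; exact hoff i j)

lemma frobN_linmap_bound (f : Mat d →ₗ[ℝ] Mat d) :
    ∃ K : ℝ, 0 ≤ K ∧ ∀ X, frobN (f X) ≤ K * frobN X := by
  let g : EuclideanSpace ℝ (Fin d × Fin d) →ₗ[ℝ] EuclideanSpace ℝ (Fin d × Fin d) :=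
    ((matEuclid d).toLinearMap.comp f).comp (matEuclid d).symm.toLinearMap
  refine ⟨‖LinearMap.toContinuousLinearMap g‖, norm_nonneg _, fun X => ?_⟩
  have h1 := (LinearMap.toContinuousLinearMap g).le_opNorm ((matEuclid d) X)
  have h2 : (LinearMap.toContinuousLinearMap g) ((matEuclid d) X) = (matEuclid d) (f X) := by
    show g ((matEuclid d) X) = (matEuclid d) (f X)
    simp only [g, LinearMap.comp_apply, LinearEquiv.coe_toLinearMap]
    rw [(matEuclid d).symm_apply_apply]
  rw [h2] at h1
  rw [frobN_eq_norm, frobN_eq_norm]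
  exact h1

end AuxHess

section AuxConst

variable {d r : ℕ}

lemma specNorm_pos_of_ne_zero {M : Mat d} (h : M ≠ 0) : 0 < specNorm M :=
  lt_of_le_of_ne (specNorm_nonneg M) (fun h0 => h (specNorm_eq_zero h0.symm))

lemma normInf_pos_of_ne_zero [Nonempty (Fin d)] {M : Mat d} (h : M ≠ 0) : 0 < normInf M :=
  lt_of_le_of_ne (normInf_nonneg M) (fun h0 => h (normInf_eq_zero h0.symm))

namespace Setup

variable (C : Setup d r)

lemma Hop_smul (c : ℝ) (X : Mat d) : C.Hop (c • X) = c • C.Hop X := hessA_smul _ _ _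

lemma Hop_add (X Y : Mat d) : C.Hop (X + Y) = C.Hop X + C.Hop Y := hessA_add _ _ _

lemma Hop_zero : C.Hop (0 : Mat d) = 0 := hessA_zero _

lemma Hop_transpose (X : Mat d) : (C.Hop X)ᵀ = C.Hop X := hessA_transpose _ _

lemma Hop_frob_bound : ∃ K, 0 ≤ K ∧ ∀ X, frobN (C.Hop X) ≤ K * frobN X :=
  frobN_linmap_bound (hessL C.Thstar)

lemma Tt_isTangent : IsTangentSpace d r C.Tt :=
  ⟨C.U, C.Dg, C.hU, C.hDdiag, C.hDunit, rfl⟩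

lemma Sstar_mem_Om : C.Sstar ∈ C.Om := ⟨C.hSsymm, fun _ _ h => h⟩

lemma M0_mem_Tt : C.U * C.Uᵀ + C.U * C.Uᵀ ∈ C.Tt := ⟨C.U, rfl⟩

lemma M0_ne_zero [Nonempty (Fin r)] : C.U * C.Uᵀ + C.U * C.Uᵀ ≠ (0 : Mat d) := by
  intro h
  have htr : (C.U * C.Uᵀ + C.U * C.Uᵀ).trace = 0 := by rw [h, Matrix.trace_zero]
  rw [Matrix.trace_add, Matrix.trace_mul_comm, C.hU, Matrix.trace_one] at htr
  have hcard : (0:ℝ) < (Fintype.card (Fin r) : ℝ) := by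
    have : 0 < Fintype.card (Fin r) := Fintype.card_pos
    exact_mod_cast this
  linarith

lemma xiT_set_one : (1:ℝ) ∈ {c | ∀ M ∈ C.Tt, normInf M ≤ c * specNorm M} := by
  intro M _
  rcases isEmpty_or_nonempty (Fin d) with he | hne
  · rw [one_mul]
    have : normInf M = 0 := by
      unfold normInf
      have : IsEmpty (Fin d × Fin d) := by
        refine ⟨fun p => ?_⟩
        exact he.elim p.1
      rw [iSup_of_empty']
      exact Real.sSup_empty
    rw [this]
    exact specNorm_nonneg M
  · rw [one_mul]
    exact normInf_le_specNorm M

lemma xiT_le_one [Nonempty (Fin d)] [Nonempty (Fin r)] : C.xiT ≤ 1 := by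
  refine csInf_le ⟨0, ?_⟩ (C.xiT_set_one)
  rintro c hc
  have h := hc _ C.M0_mem_Tt
  have h1 : 0 < normInf (C.U * C.Uᵀ + C.U * C.Uᵀ) := normInf_pos_of_ne_zero C.M0_ne_zero
  have h2 : 0 < specNorm (C.U * C.Uᵀ + C.U * C.Uᵀ) := specNorm_pos_of_ne_zero C.M0_ne_zero
  nlinarith

lemma xiT_pos [Nonempty (Fin d)] [Nonempty (Fin r)] : 0 < C.xiT := by
  have h1 : 0 < normInf (C.U * C.Uᵀ + C.U * C.Uᵀ) := normInf_pos_of_ne_zero C.M0_ne_zero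
  have h2 : 0 < specNorm (C.U * C.Uᵀ + C.U * C.Uᵀ) := specNorm_pos_of_ne_zero C.M0_ne_zero
  have hle : normInf (C.U * C.Uᵀ + C.U * C.Uᵀ) / specNorm (C.U * C.Uᵀ + C.U * C.Uᵀ) ≤ C.xiT := by
    refine le_csInf ⟨1, C.xiT_set_one⟩ ?_
    rintro c hc
    have h := hc _ C.M0_mem_Tt
    rw [div_le_iff₀ h2]
    linarith
  have : 0 < normInf (C.U * C.Uᵀ + C.U * C.Uᵀ) / specNorm (C.U * C.Uᵀ + C.U * C.Uᵀ) :=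
    div_pos h1 h2
  linarith

lemma normInf_le_xiT_mul [Nonempty (Fin d)] [Nonempty (Fin r)] {M : Mat d} (hM : M ∈ C.Tt) :
    normInf M ≤ C.xiT * specNorm M := by
  rcases eq_or_ne (specNorm M) 0 with h0 | h0
  · rw [specNorm_eq_zero h0, normInf_zero, specNorm_zero, mul_zero]
  · have hpos : 0 < specNorm M := lt_of_le_of_ne (specNorm_nonneg M) (Ne.symm h0)
    have hle : normInf M / specNorm M ≤ C.xiT := by
      refine le_csInf ⟨1, C.xiT_set_one⟩ ?_
      rintro c hc
      rw [div_le_iff₀ hpos]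
      linarith [hc M hM]
    calc normInf M = normInf M / specNorm M * specNorm M := by field_simp
      _ ≤ C.xiT * specNorm M := mul_le_mul_of_nonneg_right hle (le_of_lt hpos)

lemma muOm_set_d [Nonempty (Fin d)] :
    (d:ℝ) ∈ {c | ∀ N ∈ C.Om, specNorm N ≤ c * normInf N} := fun N _ =>
  specNorm_le_d_mul_normInf N

lemma muOm_pos [Nonempty (Fin d)] : 0 < C.muOm := by
  have h1 : 0 < normInf C.Sstar := normInf_pos_of_ne_zero C.hSne
  have h2 : 0 < specNorm C.Sstar := specNorm_pos_of_ne_zero C.hSne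
  have hle : specNorm C.Sstar / normInf C.Sstar ≤ C.muOm := by
    refine le_csInf ⟨(d:ℝ), C.muOm_set_d⟩ ?_
    rintro c hc
    rw [div_le_iff₀ h1]
    linarith [hc _ C.Sstar_mem_Om]
  have : 0 < specNorm C.Sstar / normInf C.Sstar := div_pos h2 h1
  linarith

lemma specNorm_le_muOm_mul [Nonempty (Fin d)] {N : Mat d} (hN : N ∈ C.Om) :
    specNorm N ≤ C.muOm * normInf N := by
  rcases eq_or_ne (normInf N) 0 with h0 | h0
  · rw [normInf_eq_zero h0, specNorm_zero, normInf_zero, mul_zero]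
  · have hpos : 0 < normInf N := lt_of_le_of_ne (normInf_nonneg N) (Ne.symm h0)
    have hle : specNorm N / normInf N ≤ C.muOm := by
      refine le_csInf ⟨(d:ℝ), C.muOm_set_d⟩ ?_
      rintro c hc
      rw [div_le_iff₀ hpos]
      linarith [hc N hN]
    calc specNorm N = specNorm N / normInf N * normInf N := by field_simp
      _ ≤ C.muOm * normInf N := mul_le_mul_of_nonneg_right hle (le_of_lt hpos)

end Setup

end AuxConst

section AuxConst2

variable {d r : ℕ}

lemma projPerp_smul (V : Submodule ℝ (Mat d)) (c : ℝ) (X : Mat d) :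
    projPerp V (c • X) = c • projPerp V X := by
  unfold projPerp
  rw [proj_smul, smul_sub]

lemma projPerp_add (V : Submodule ℝ (Mat d)) (X Y : Mat d) :
    projPerp V (X + Y) = projPerp V X + projPerp V Y := by
  unfold projPerp
  rw [proj_add]
  abel

namespace Setup

variable (C : Setup d r)

lemma betaOm_bdd [Nonempty (Fin d)] :
    BddAbove {t | ∃ M, M ∈ C.Om ∧ specNorm M = 1 ∧ t = specNorm (C.Hop M)} := by
  obtain ⟨K, hK0, hK⟩ := C.Hop_frob_bound
  refine ⟨K * d, ?_⟩
  rintro t ⟨M, _, hM1, rfl⟩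
  calc specNorm (C.Hop M) ≤ frobN (C.Hop M) := specNorm_le_frobN _
    _ ≤ K * frobN M := hK M
    _ ≤ K * (d * normInf M) := mul_le_mul_of_nonneg_left (frobN_le_normInf M) hK0
    _ ≤ K * (d * specNorm M) := by
        refine mul_le_mul_of_nonneg_left ?_ hK0
        exact mul_le_mul_of_nonneg_left (normInf_le_specNorm M) (by positivity)
    _ = K * d := by rw [hM1, mul_one]

lemma betaT_bdd [Nonempty (Fin d)] :
    BddAbove {t | ∃ T' : Submodule ℝ (Mat d), IsTangentSpace d r T' ∧ rho C.Tt T' ≤ C.xiT / 2 ∧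
      ∃ M, M ∈ T' ∧ normInf M = 1 ∧ t = normInf (C.Hop M)} := by
  obtain ⟨K, hK0, hK⟩ := C.Hop_frob_bound
  refine ⟨K * d, ?_⟩
  rintro t ⟨T', _, _, M, _, hM1, rfl⟩
  calc normInf (C.Hop M) ≤ frobN (C.Hop M) := normInf_le_frobN _
    _ ≤ K * frobN M := hK M
    _ ≤ K * (d * normInf M) := mul_le_mul_of_nonneg_left (frobN_le_normInf M) hK0
    _ = K * d := by rw [hM1, mul_one]

lemma deltaOm_bdd [Nonempty (Fin d)] :
    BddAbove {t | ∃ M, M ∈ C.Om ∧ normInf M = 1 ∧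
      t = normInf (projPerp C.Om (C.Hop M))} := by
  obtain ⟨K, hK0, hK⟩ := C.Hop_frob_bound
  refine ⟨K * d, ?_⟩
  rintro t ⟨M, _, hM1, rfl⟩
  calc normInf (projPerp C.Om (C.Hop M)) ≤ normInf (C.Hop M) :=
        normInf_projPerp_OmegaS_le C.hSsymm _
    _ ≤ frobN (C.Hop M) := normInf_le_frobN _
    _ ≤ K * frobN M := hK M
    _ ≤ K * (d * normInf M) := mul_le_mul_of_nonneg_left (frobN_le_normInf M) hK0
    _ = K * d := by rw [hM1, mul_one]

lemma deltaT_bdd [Nonempty (Fin d)] (ε : ℝ) :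
    BddAbove {t | ∃ T' : Submodule ℝ (Mat d), IsTangentSpace d r T' ∧ rho C.Tt T' ≤ ε ∧
      ∃ M, M ∈ T' ∧ specNorm M = 1 ∧ t = specNorm (projPerp T' (C.Hop M))} := by
  obtain ⟨K, hK0, hK⟩ := C.Hop_frob_bound
  refine ⟨K * d, ?_⟩
  rintro t ⟨T', ⟨U', D', hU', _, _, rfl⟩, _, M, _, hM1, rfl⟩
  calc specNorm (projPerp (TSpace U') (C.Hop M)) ≤ specNorm (C.Hop M) :=
        specNorm_projPerp_TSpace_le hU' (C.Hop_transpose M)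
    _ ≤ frobN (C.Hop M) := specNorm_le_frobN _
    _ ≤ K * frobN M := hK M
    _ ≤ K * (d * normInf M) := mul_le_mul_of_nonneg_left (frobN_le_normInf M) hK0
    _ ≤ K * (d * specNorm M) := by
        refine mul_le_mul_of_nonneg_left ?_ hK0
        exact mul_le_mul_of_nonneg_left (normInf_le_specNorm M) (by positivity)
    _ = K * d := by rw [hM1, mul_one]

lemma rho_bdd [Nonempty (Fin d)] (T' : Submodule ℝ (Mat d)) :
    BddAbove {t | ∃ M : Mat d, specNorm M = 1 ∧
      t = specNorm (proj C.Tt M - proj T' M)} := by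
  refine ⟨2 * d, ?_⟩
  rintro t ⟨M, hM1, rfl⟩
  calc specNorm (proj C.Tt M - proj T' M) ≤
      specNorm (proj C.Tt M) + specNorm (proj T' M) := specNorm_sub_le _ _
    _ ≤ d * specNorm M + d * specNorm M :=
        add_le_add (specNorm_proj_le _ _) (specNorm_proj_le _ _)
    _ = 2 * d := by rw [hM1]; ring

lemma rho_ge [Nonempty (Fin d)] (T' : Submodule ℝ (Mat d)) (X : Mat d) :
    specNorm (proj C.Tt X - proj T' X) ≤ rho C.Tt T' * specNorm X := by
  rcases eq_or_ne (specNorm X) 0 with h0 | h0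
  · rw [specNorm_eq_zero h0]
    rw [proj_zero, proj_zero, sub_zero, specNorm_zero, mul_zero]
  · have hpos : 0 < specNorm X := lt_of_le_of_ne (specNorm_nonneg X) (Ne.symm h0)
    set s := specNorm X with hs
    have h1 : specNorm (s⁻¹ • X) = 1 := by
      rw [specNorm_smul, abs_of_pos (by positivity), inv_mul_cancel₀ h0]
    have h2 : specNorm (proj C.Tt (s⁻¹ • X) - proj T' (s⁻¹ • X)) ≤ rho C.Tt T' :=
      le_csSup (C.rho_bdd T') ⟨s⁻¹ • X, h1, rfl⟩
    have h3 : proj C.Tt (s⁻¹ • X) - proj T' (s⁻¹ • X) =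
        s⁻¹ • (proj C.Tt X - proj T' X) := by
      rw [proj_smul, proj_smul, smul_sub]
    rw [h3, specNorm_smul, abs_of_pos (by positivity)] at h2
    calc specNorm (proj C.Tt X - proj T' X)
        = s * (s⁻¹ * specNorm (proj C.Tt X - proj T' X)) := by field_simp
      _ ≤ s * rho C.Tt T' := mul_le_mul_of_nonneg_left h2 (le_of_lt hpos)
      _ = rho C.Tt T' * s := mul_comm _ _

lemma alphaOm_le_proj [Nonempty (Fin d)] {M : Mat d} (hM : M ∈ C.Om) :
    C.alphaOm * normInf M ≤ normInf (proj C.Om (C.Hop M)) := by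
  rcases eq_or_ne (normInf M) 0 with h0 | h0
  · rw [h0, mul_zero]
    exact normInf_nonneg _
  · have hpos : 0 < normInf M := lt_of_le_of_ne (normInf_nonneg M) (Ne.symm h0)
    set t := normInf M with ht
    have hni : normInf (t⁻¹ • M) = 1 := by
      rw [normInf_smul, abs_of_pos (by positivity), inv_mul_cancel₀ h0]
    have hle : C.alphaOm ≤ normInf (proj C.Om (C.Hop (t⁻¹ • M))) := by
      refine csInf_le ⟨0, ?_⟩ ⟨t⁻¹ • M, Submodule.smul_mem _ _ hM, hni, rfl⟩
      rintro s ⟨N, _, _, rfl⟩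
      exact normInf_nonneg _
    rw [C.Hop_smul, proj_smul, normInf_smul, abs_of_pos (by positivity)] at hle
    calc C.alphaOm * t ≤ t⁻¹ * normInf (proj C.Om (C.Hop M)) * t :=
          mul_le_mul_of_nonneg_right hle (le_of_lt hpos)
      _ = normInf (proj C.Om (C.Hop M)) := by field_simp

lemma alphaT_le_proj [Nonempty (Fin d)] {T' : Submodule ℝ (Mat d)}
    (hT : IsTangentSpace d r T') (hrho : rho C.Tt T' ≤ C.xiT / 2)
    {N : Mat d} (hN : N ∈ T') :
    C.alphaT (C.xiT / 2) * specNorm N ≤ specNorm (proj T' (C.Hop N)) := by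
  rcases eq_or_ne (specNorm N) 0 with h0 | h0
  · rw [h0, mul_zero]
    exact specNorm_nonneg _
  · have hpos : 0 < specNorm N := lt_of_le_of_ne (specNorm_nonneg N) (Ne.symm h0)
    set t := specNorm N with ht
    have hni : specNorm (t⁻¹ • N) = 1 := by
      rw [specNorm_smul, abs_of_pos (by positivity), inv_mul_cancel₀ h0]
    have hle : C.alphaT (C.xiT / 2) ≤ specNorm (proj T' (C.Hop (t⁻¹ • N))) := by
      refine csInf_le ⟨0, ?_⟩ ⟨T', hT, hrho, t⁻¹ • N, Submodule.smul_mem _ _ hN, hni, rfl⟩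
      rintro s ⟨T'', _, _, N', _, _, rfl⟩
      exact specNorm_nonneg _
    rw [C.Hop_smul, proj_smul, specNorm_smul, abs_of_pos (by positivity)] at hle
    calc C.alphaT (C.xiT / 2) * t ≤ t⁻¹ * specNorm (proj T' (C.Hop N)) * t :=
          mul_le_mul_of_nonneg_right hle (le_of_lt hpos)
      _ = specNorm (proj T' (C.Hop N)) := by field_simp

lemma deltaOm_ge_projPerp [Nonempty (Fin d)] {M : Mat d} (hM : M ∈ C.Om) :
    normInf (projPerp C.Om (C.Hop M)) ≤ C.deltaOm * normInf M := by
  rcases eq_or_ne (normInf M) 0 with h0 | h0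
  · have hM0 : M = 0 := normInf_eq_zero h0
    subst hM0
    rw [C.Hop_zero]
    unfold projPerp
    rw [proj_zero, sub_zero, normInf_zero, mul_zero]
  · have hpos : 0 < normInf M := lt_of_le_of_ne (normInf_nonneg M) (Ne.symm h0)
    set t := normInf M with ht
    have hni : normInf (t⁻¹ • M) = 1 := by
      rw [normInf_smul, abs_of_pos (by positivity), inv_mul_cancel₀ h0]
    have hle : normInf (projPerp C.Om (C.Hop (t⁻¹ • M))) ≤ C.deltaOm :=
      le_csSup C.deltaOm_bdd ⟨t⁻¹ • M, Submodule.smul_mem _ _ hM, hni, rfl⟩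
    rw [C.Hop_smul, projPerp_smul, normInf_smul, abs_of_pos (by positivity)] at hle
    calc normInf (projPerp C.Om (C.Hop M))
        = t * (t⁻¹ * normInf (projPerp C.Om (C.Hop M))) := by field_simp
      _ ≤ t * C.deltaOm := mul_le_mul_of_nonneg_left hle (le_of_lt hpos)
      _ = C.deltaOm * t := mul_comm _ _

lemma deltaT_ge_projPerp [Nonempty (Fin d)] {T' : Submodule ℝ (Mat d)}
    (hT : IsTangentSpace d r T') (hrho : rho C.Tt T' ≤ C.xiT / 2)
    {N : Mat d} (hN : N ∈ T') :
    specNorm (projPerp T' (C.Hop N)) ≤ C.deltaT (C.xiT / 2) * specNorm N := by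
  rcases eq_or_ne (specNorm N) 0 with h0 | h0
  · have hN0 : N = 0 := specNorm_eq_zero h0
    subst hN0
    rw [C.Hop_zero]
    unfold projPerp
    rw [proj_zero, sub_zero, specNorm_zero, mul_zero]
  · have hpos : 0 < specNorm N := lt_of_le_of_ne (specNorm_nonneg N) (Ne.symm h0)
    set t := specNorm N with ht
    have hni : specNorm (t⁻¹ • N) = 1 := by
      rw [specNorm_smul, abs_of_pos (by positivity), inv_mul_cancel₀ h0]
    have hle : specNorm (projPerp T' (C.Hop (t⁻¹ • N))) ≤ C.deltaT (C.xiT / 2) :=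
      le_csSup (C.deltaT_bdd (C.xiT / 2))
        ⟨T', hT, hrho, t⁻¹ • N, Submodule.smul_mem _ _ hN, hni, rfl⟩
    rw [C.Hop_smul, projPerp_smul, specNorm_smul, abs_of_pos (by positivity)] at hle
    calc specNorm (projPerp T' (C.Hop N))
        = t * (t⁻¹ * specNorm (projPerp T' (C.Hop N))) := by field_simp
      _ ≤ t * C.deltaT (C.xiT / 2) := mul_le_mul_of_nonneg_left hle (le_of_lt hpos)
      _ = C.deltaT (C.xiT / 2) * t := mul_comm _ _

lemma betaOm_ge [Nonempty (Fin d)] {M : Mat d} (hM : M ∈ C.Om) :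
    specNorm (C.Hop M) ≤ C.betaOm * specNorm M := by
  rcases eq_or_ne (specNorm M) 0 with h0 | h0
  · have hM0 : M = 0 := specNorm_eq_zero h0
    subst hM0
    rw [C.Hop_zero, specNorm_zero, mul_zero]
  · have hpos : 0 < specNorm M := lt_of_le_of_ne (specNorm_nonneg M) (Ne.symm h0)
    set t := specNorm M with ht
    have hni : specNorm (t⁻¹ • M) = 1 := by
      rw [specNorm_smul, abs_of_pos (by positivity), inv_mul_cancel₀ h0]
    have hle : specNorm (C.Hop (t⁻¹ • M)) ≤ C.betaOm :=
      le_csSup C.betaOm_bdd ⟨t⁻¹ • M, Submodule.smul_mem _ _ hM, hni, rfl⟩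
    rw [C.Hop_smul, specNorm_smul, abs_of_pos (by positivity)] at hle
    calc specNorm (C.Hop M) = t * (t⁻¹ * specNorm (C.Hop M)) := by field_simp
      _ ≤ t * C.betaOm := mul_le_mul_of_nonneg_left hle (le_of_lt hpos)
      _ = C.betaOm * t := mul_comm _ _

lemma betaT_ge [Nonempty (Fin d)] {T' : Submodule ℝ (Mat d)}
    (hT : IsTangentSpace d r T') (hrho : rho C.Tt T' ≤ C.xiT / 2)
    {N : Mat d} (hN : N ∈ T') :
    normInf (C.Hop N) ≤ C.betaT * normInf N := by
  rcases eq_or_ne (normInf N) 0 with h0 | h0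
  · have hN0 : N = 0 := normInf_eq_zero h0
    subst hN0
    rw [C.Hop_zero, normInf_zero, mul_zero]
  · have hpos : 0 < normInf N := lt_of_le_of_ne (normInf_nonneg N) (Ne.symm h0)
    set t := normInf N with ht
    have hni : normInf (t⁻¹ • N) = 1 := by
      rw [normInf_smul, abs_of_pos (by positivity), inv_mul_cancel₀ h0]
    have hle : normInf (C.Hop (t⁻¹ • N)) ≤ C.betaT :=
      le_csSup C.betaT_bdd ⟨T', hT, hrho, t⁻¹ • N, Submodule.smul_mem _ _ hN, hni, rfl⟩
    rw [C.Hop_smul, normInf_smul, abs_of_pos (by positivity)] at hle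
    calc normInf (C.Hop N) = t * (t⁻¹ * normInf (C.Hop N)) := by field_simp
      _ ≤ t * C.betaT := mul_le_mul_of_nonneg_left hle (le_of_lt hpos)
      _ = C.betaT * t := mul_comm _ _

lemma betaC_pos [Nonempty (Fin d)] : 0 < C.betaC := by
  have hspos : 0 < specNorm C.Sstar := specNorm_pos_of_ne_zero C.hSne
  set M1 : Mat d := (specNorm C.Sstar)⁻¹ • C.Sstar with hM1
  have hmem : M1 ∈ C.Om := Submodule.smul_mem _ _ C.Sstar_mem_Om
  have hspec1 : specNorm M1 = 1 := by
    rw [hM1, specNorm_smul, abs_of_pos (by positivity), inv_mul_cancel₀ (ne_of_gt hspos)]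
  have hsymm : M1.IsSymm := by
    show M1ᵀ = M1
    rw [hM1, Matrix.transpose_smul, C.hSsymm]
  have hne : M1 ≠ 0 := by
    intro h
    rw [h, specNorm_zero] at hspec1
    norm_num at hspec1
  have hHne : C.Hop M1 ≠ 0 := hessA_ne_zero_of hsymm hne
  have hHpos : 0 < specNorm (C.Hop M1) := specNorm_pos_of_ne_zero hHne
  have hle : specNorm (C.Hop M1) ≤ C.betaOm :=
    le_csSup C.betaOm_bdd ⟨M1, hmem, hspec1, rfl⟩
  calc (0:ℝ) < specNorm (C.Hop M1) := hHpos
    _ ≤ C.betaOm := hle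
    _ ≤ C.betaC := le_max_left _ _

end Setup

end AuxConst2

set_option maxHeartbeats 2000000 in
/-- Proposition 1(b), coupled stability, maximum effect: under the
stability and γ-feasibility assumptions, for `γ ∈ [γ_min, γ_max]` and every tangent
space `T'` with `ρ(T,T') ≤ ξ(T)/2`, the maximum effect of `H*` on the orthogonal
complement is controlled: `‖P_{Y^⊥} D H*(M+N)‖_γ ≤ (1-ν)‖P_Y D H*(M+N)‖_γ`. -/
theorem coupled_stability_maximum_effect (d r : ℕ) (hd : 1 ≤ d) (hr : 1 ≤ r)
    (C : Setup d r) (ν γ : ℝ) (hstab : C.Stability ν) (hfeas : C.GammaFeasible ν)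
    (hγ : γ ∈ Set.Icc (C.gammaMin ν) (C.gammaMax ν)) :
    ∀ T' : Submodule ℝ (Mat d), IsTangentSpace d r T' → rho C.Tt T' ≤ C.xiT / 2 →
      ∀ M N : Mat d, M ∈ C.Om → N ∈ T' →
        ganorm γ (projPerp C.Om (C.Hop (M + N))) (projPerp T' (C.Hop (M + N))) ≤
          (1 - ν) * ganorm γ (proj C.Om (C.Hop (M + N))) (proj T' (C.Hop (M + N))) := by
  haveI : Nonempty (Fin d) := Fin.pos_iff_nonempty.mp hd
  haveI : Nonempty (Fin r) := Fin.pos_iff_nonempty.mp hr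
  obtain ⟨hα, hν, hν2, hδα⟩ := hstab
  intro T' hT hrho M N hM hN
  obtain ⟨U', D', hU', hD1, hD2, rfl⟩ := hT
  have hT : IsTangentSpace d r (TSpace U') := ⟨U', D', hU', hD1, hD2, rfl⟩
  unfold ganorm
  -- abbreviations
  set α : ℝ := C.alphaC with hαd
  set β : ℝ := C.betaC with hβd
  set ξ : ℝ := C.xiT with hξd
  set μ : ℝ := C.muOm with hμd
  set a : ℝ := normInf M with had
  set b : ℝ := specNorm N with hbd
  -- positivity facts
  have hβ0 : 0 < β := C.betaC_pos
  have hξ0 : 0 < ξ := C.xiT_pos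
  have hξ1 : ξ ≤ 1 := C.xiT_le_one
  have hμ0 : 0 < μ := C.muOm_pos
  have hν1 : 0 < 1 - ν := by linarith
  have h2ν : 0 < 2 - ν := by linarith
  have ha0 : 0 ≤ a := normInf_nonneg M
  have hb0 : 0 ≤ b := specNorm_nonneg N
  -- gamma range facts
  have hγmin : 3 * β * (2 - ν) * ξ / (ν * α) ≤ γ := hγ.1
  have hγmax : γ ≤ ν * α / (2 * β * (2 - ν) * μ) := hγ.2
  have hγpos : 0 < γ := by
    refine lt_of_lt_of_le ?_ hγmin
    have hnum : 0 < 3 * β * (2 - ν) * ξ := by positivity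
    have hden : 0 < ν * α := mul_pos hν hα
    positivity
  have T1 : 3 * β * (2 - ν) * ξ ≤ ν * α * γ := by
    rw [div_le_iff₀ (mul_pos hν hα)] at hγmin
    calc 3 * β * (2 - ν) * ξ ≤ γ * (ν * α) := hγmin
      _ = ν * α * γ := by ring
  have T2 : 2 * β * (2 - ν) * μ * γ ≤ ν * α := by
    rw [le_div_iff₀ (by positivity : (0:ℝ) < 2 * β * (2 - ν) * μ)] at hγmax
    calc 2 * β * (2 - ν) * μ * γ = γ * (2 * β * (2 - ν) * μ) := by ring
      _ ≤ ν * α := hγmax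
  -- delta/alpha/beta comparisons
  have hδ : C.deltaC ≤ (1 - 2 * ν) * α := by
    rw [div_le_iff₀ hα] at hδα
    linarith only [hδα]
  have hδOm : C.deltaOm ≤ (1 - 2 * ν) * α := le_trans (le_max_left _ _) hδ
  have hδT : C.deltaT (C.xiT / 2) ≤ (1 - 2 * ν) * α := le_trans (le_max_right _ _) hδ
  have hαOm : α ≤ C.alphaOm := min_le_left _ _
  have hαT : α ≤ C.alphaT (C.xiT / 2) := min_le_right _ _
  have hβOm : C.betaOm ≤ β := le_max_left _ _
  have hβT : C.betaT ≤ β := le_max_right _ _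
  -- (s0) ‖N‖∞ ≤ 2ξb
  have hproj_self : proj (TSpace U') N = N := proj_eq_self hN
  have hdiff : specNorm (proj C.Tt N - N) ≤ ξ / 2 * b := by
    calc specNorm (proj C.Tt N - N)
        = specNorm (proj C.Tt N - proj (TSpace U') N) := by rw [hproj_self]
      _ ≤ rho C.Tt (TSpace U') * specNorm N := C.rho_ge (TSpace U') N
      _ ≤ ξ / 2 * b := mul_le_mul_of_nonneg_right hrho hb0
  have hndmem : proj C.Tt N ∈ C.Tt := proj_mem _ _
  have hndspec : specNorm (proj C.Tt N) ≤ 3 / 2 * b := by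
    calc specNorm (proj C.Tt N)
        = specNorm (N + (proj C.Tt N - N)) := by
          rw [show N + (proj C.Tt N - N) = proj C.Tt N from by abel]
      _ ≤ specNorm N + specNorm (proj C.Tt N - N) := specNorm_add_le _ _
      _ ≤ b + ξ / 2 * b := add_le_add le_rfl hdiff
      _ ≤ 3 / 2 * b := by
          have hx := mul_le_mul_of_nonneg_right hξ1 hb0
          linarith only [hx, hb0]
  have hNinf : normInf N ≤ 2 * ξ * b := by
    calc normInf N
        = normInf (proj C.Tt N + (N - proj C.Tt N)) := by
          rw [show proj C.Tt N + (N - proj C.Tt N) = N from by abel]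
      _ ≤ normInf (proj C.Tt N) + normInf (N - proj C.Tt N) := normInf_add_le _ _
      _ ≤ ξ * specNorm (proj C.Tt N) + specNorm (N - proj C.Tt N) :=
          add_le_add (C.normInf_le_xiT_mul hndmem) (normInf_le_specNorm _)
      _ ≤ ξ * (3 / 2 * b) + ξ / 2 * b := by
          refine add_le_add (mul_le_mul_of_nonneg_left hndspec (le_of_lt hξ0)) ?_
          rw [show N - proj C.Tt N = -(proj C.Tt N - N) from by abel, specNorm_neg]
          exact hdiff
      _ = 2 * ξ * b := by ring
  -- (s1)/(s2) cross bounds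
  have hHNinf : normInf (C.Hop N) ≤ 2 * (β * ξ) * b := by
    calc normInf (C.Hop N) ≤ C.betaT * normInf N := C.betaT_ge hT hrho hN
      _ ≤ β * normInf N := mul_le_mul_of_nonneg_right hβT (normInf_nonneg N)
      _ ≤ β * (2 * ξ * b) := mul_le_mul_of_nonneg_left hNinf (le_of_lt hβ0)
      _ = 2 * (β * ξ) * b := by ring
  have hHMspec : specNorm (C.Hop M) ≤ (β * μ) * a := by
    calc specNorm (C.Hop M) ≤ C.betaOm * specNorm M := C.betaOm_ge hM
      _ ≤ β * specNorm M := mul_le_mul_of_nonneg_right hβOm (specNorm_nonneg M)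
      _ ≤ β * (μ * a) := mul_le_mul_of_nonneg_left (C.specNorm_le_muOm_mul hM) (le_of_lt hβ0)
      _ = (β * μ) * a := by ring
  -- main quantities
  set G : Mat d := C.Hop (M + N) with hG
  have hGsplit : G = C.Hop M + C.Hop N := C.Hop_add M N
  set g1 : ℝ := normInf (proj C.Om G) with hg1d
  set g2 : ℝ := specNorm (proj (TSpace U') G) with hg2d
  set h1 : ℝ := normInf (projPerp C.Om G) with hh1d
  set h2 : ℝ := specNorm (projPerp (TSpace U') G) with hh2d
  set g : ℝ := max (g1 / γ) g2 with hgd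
  -- (e3)
  have hg1lb : α * a - 2 * (β * ξ) * b ≤ g1 := by
    have hsplit : proj C.Om G = proj C.Om (C.Hop M) + proj C.Om (C.Hop N) := by
      rw [hGsplit, proj_add]
    have ht1 : C.alphaOm * a ≤ normInf (proj C.Om (C.Hop M)) := C.alphaOm_le_proj hM
    have ht2 : normInf (proj C.Om (C.Hop N)) ≤ 2 * (β * ξ) * b :=
      le_trans (normInf_proj_OmegaS_le C.hSsymm _) hHNinf
    have ht3 : normInf (proj C.Om (C.Hop M)) ≤ g1 + normInf (proj C.Om (C.Hop N)) := by
      calc normInf (proj C.Om (C.Hop M))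
          = normInf (proj C.Om G - proj C.Om (C.Hop N)) := by rw [hsplit]; congr 1; abel
        _ ≤ normInf (proj C.Om G) + normInf (proj C.Om (C.Hop N)) := normInf_sub_le _ _
        _ = g1 + normInf (proj C.Om (C.Hop N)) := by rw [hg1d]
    have hαa : α * a ≤ C.alphaOm * a := mul_le_mul_of_nonneg_right hαOm ha0
    linarith only [ht1, ht2, ht3, hαa]
  -- (e4)
  have hg2lb : α * b - 2 * (β * μ) * a ≤ g2 := by
    have hsplit : proj (TSpace U') G = proj (TSpace U') (C.Hop M) + proj (TSpace U') (C.Hop N) := by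
      rw [hGsplit, proj_add]
    have ht1 : C.alphaT (C.xiT / 2) * b ≤ specNorm (proj (TSpace U') (C.Hop N)) :=
      C.alphaT_le_proj hT hrho hN
    have ht2 : specNorm (proj (TSpace U') (C.Hop M)) ≤ 2 * ((β * μ) * a) := by
      calc specNorm (proj (TSpace U') (C.Hop M)) ≤ 2 * specNorm (C.Hop M) :=
            specNorm_proj_TSpace_le hU' (C.Hop_transpose M)
        _ ≤ 2 * ((β * μ) * a) := by linarith only [hHMspec]
    have ht3 : specNorm (proj (TSpace U') (C.Hop N)) ≤
        g2 + specNorm (proj (TSpace U') (C.Hop M)) := by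
      calc specNorm (proj (TSpace U') (C.Hop N))
          = specNorm (proj (TSpace U') G - proj (TSpace U') (C.Hop M)) := by
            rw [hsplit]; congr 1; abel
        _ ≤ specNorm (proj (TSpace U') G) + specNorm (proj (TSpace U') (C.Hop M)) :=
            specNorm_sub_le _ _
        _ = g2 + specNorm (proj (TSpace U') (C.Hop M)) := by rw [hg2d]
    have hαb : α * b ≤ C.alphaT (C.xiT / 2) * b := mul_le_mul_of_nonneg_right hαT hb0
    linarith only [ht1, ht2, ht3, hαb]
  -- (e5)
  have hh1ub : h1 ≤ (1 - 2 * ν) * α * a + 2 * (β * ξ) * b := by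
    have hsplit : projPerp C.Om G = projPerp C.Om (C.Hop M) + projPerp C.Om (C.Hop N) := by
      rw [hGsplit, projPerp_add]
    have ht1 : normInf (projPerp C.Om (C.Hop M)) ≤ (1 - 2 * ν) * α * a := by
      calc normInf (projPerp C.Om (C.Hop M)) ≤ C.deltaOm * a := C.deltaOm_ge_projPerp hM
        _ ≤ (1 - 2 * ν) * α * a := mul_le_mul_of_nonneg_right hδOm ha0
    have ht2 : normInf (projPerp C.Om (C.Hop N)) ≤ 2 * (β * ξ) * b :=
      le_trans (normInf_projPerp_OmegaS_le C.hSsymm _) hHNinf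
    calc h1 = normInf (projPerp C.Om (C.Hop M) + projPerp C.Om (C.Hop N)) := by
          rw [hh1d, hsplit]
      _ ≤ normInf (projPerp C.Om (C.Hop M)) + normInf (projPerp C.Om (C.Hop N)) :=
          normInf_add_le _ _
      _ ≤ (1 - 2 * ν) * α * a + 2 * (β * ξ) * b := add_le_add ht1 ht2
  -- (e6)
  have hh2ub : h2 ≤ (1 - 2 * ν) * α * b + (β * μ) * a := by
    have hsplit : projPerp (TSpace U') G =
        projPerp (TSpace U') (C.Hop M) + projPerp (TSpace U') (C.Hop N) := by
      rw [hGsplit, projPerp_add]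
    have ht1 : specNorm (projPerp (TSpace U') (C.Hop N)) ≤ (1 - 2 * ν) * α * b := by
      calc specNorm (projPerp (TSpace U') (C.Hop N)) ≤ C.deltaT (C.xiT / 2) * b :=
            C.deltaT_ge_projPerp hT hrho hN
        _ ≤ (1 - 2 * ν) * α * b := mul_le_mul_of_nonneg_right hδT hb0
    have ht2 : specNorm (projPerp (TSpace U') (C.Hop M)) ≤ (β * μ) * a :=
      le_trans (specNorm_projPerp_TSpace_le hU' (C.Hop_transpose M)) hHMspec
    calc h2 = specNorm (projPerp (TSpace U') (C.Hop M) + projPerp (TSpace U') (C.Hop N)) := by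
          rw [hh2d, hsplit]
      _ ≤ specNorm (projPerp (TSpace U') (C.Hop M)) +
          specNorm (projPerp (TSpace U') (C.Hop N)) := specNorm_add_le _ _
      _ ≤ (β * μ) * a + (1 - 2 * ν) * α * b := add_le_add ht2 ht1
      _ = (1 - 2 * ν) * α * b + (β * μ) * a := by ring
  -- g facts
  have hgg2 : g2 ≤ g := le_max_right _ _
  have hg0 : 0 ≤ g := le_trans (specNorm_nonneg _) hgg2
  have hgg1 : g1 ≤ γ * g := by
    have hle : g1 / γ ≤ g := le_max_left _ _
    rw [div_le_iff₀ hγpos] at hle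
    linarith only [hle]
  have hA1 : α * a - 2 * (β * ξ) * b ≤ γ * g := le_trans hg1lb hgg1
  have hA2 : α * b - 2 * (β * μ) * a ≤ g := le_trans hg2lb hgg2
  -- claim 1
  have c1nn : (0:ℝ) ≤ 3 * (1 - ν) * (2 - 4 * ν + ν ^ 2) := by
    refine mul_nonneg (mul_nonneg (by norm_num) (le_of_lt hν1)) ?_
    have := sq_nonneg ν
    linarith only [hν2, this]
  have k1 := mul_le_mul_of_nonneg_left hA1 c1nn
  have c2pos : (0:ℝ) < 3 * ν * (2 - ν) * (1 - ν) * γ :=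
    mul_pos (mul_pos (mul_pos (mul_pos (by norm_num) hν) h2ν) hν1) hγpos
  have k2 := mul_le_mul_of_nonneg_left hA2 (le_of_lt c2pos)
  have k3 := mul_le_mul_of_nonneg_left hh1ub (by linarith : (0:ℝ) ≤ 6 * (1 - ν))
  have c4nn : (0:ℝ) ≤ 3 * ν * (1 - ν) * a :=
    mul_nonneg (mul_nonneg (mul_nonneg (by norm_num) (le_of_lt hν)) (le_of_lt hν1)) ha0
  have k4 := mul_le_mul_of_nonneg_left T2 c4nn
  have c5nn : (0:ℝ) ≤ 2 * (1 - ν) * (2 - ν) * b :=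
    mul_nonneg (mul_nonneg (mul_nonneg (by norm_num) (le_of_lt hν1)) (le_of_lt h2ν)) hb0
  have k5 := mul_le_mul_of_nonneg_left T1 c5nn
  have hXnn : (0:ℝ) ≤ ν * (1 - ν) * (2 - ν) * α * γ * b :=
    mul_nonneg (mul_nonneg (mul_nonneg (mul_nonneg (mul_nonneg (le_of_lt hν) (le_of_lt hν1))
      (le_of_lt h2ν)) (le_of_lt hα)) (le_of_lt hγpos)) hb0
  have s1 := sub_nonneg.mpr k1
  have s2 := sub_nonneg.mpr k2
  have s3 := sub_nonneg.mpr k3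
  have s4 := sub_nonneg.mpr k4
  have s5 := sub_nonneg.mpr k5
  have key1 : (0:ℝ) ≤ 6 * (1 - ν) * ((1 - ν) * γ * g - h1) := by
    have e : 6 * (1 - ν) * ((1 - ν) * γ * g - h1) =
        (3 * (1 - ν) * (2 - 4 * ν + ν ^ 2) * (γ * g)
          - 3 * (1 - ν) * (2 - 4 * ν + ν ^ 2) * (α * a - 2 * (β * ξ) * b))
        + (3 * ν * (2 - ν) * (1 - ν) * γ * g
          - 3 * ν * (2 - ν) * (1 - ν) * γ * (α * b - 2 * (β * μ) * a))
        + (6 * (1 - ν) * ((1 - 2 * ν) * α * a + 2 * (β * ξ) * b) - 6 * (1 - ν) * h1)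
        + (3 * ν * (1 - ν) * a * (ν * α) - 3 * ν * (1 - ν) * a * (2 * β * (2 - ν) * μ * γ))
        + (2 * (1 - ν) * (2 - ν) * b * (ν * α * γ)
          - 2 * (1 - ν) * (2 - ν) * b * (3 * β * (2 - ν) * ξ))
        + ν * (1 - ν) * (2 - ν) * α * γ * b := by ring
    rw [e]
    exact add_nonneg (add_nonneg (add_nonneg (add_nonneg (add_nonneg s1 s2) s3) s4) s5) hXnn
  have G1 : h1 ≤ (1 - ν) * γ * g := by
    rcases le_or_gt h1 ((1 - ν) * γ * g) with h | h
    · exact h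
    · exfalso
      have hneg : 6 * (1 - ν) * ((1 - ν) * γ * g - h1) < 0 :=
        mul_neg_of_pos_of_neg (by linarith only [hν1]) (by linarith only [h])
      linarith only [key1, hneg]
  -- claim 2
  have n1c : (0:ℝ) ≤ 3 * (2 - ν) * (ν * (3 - 2 * ν)) := by
    refine mul_nonneg (mul_nonneg (by norm_num) (le_of_lt h2ν)) ?_
    exact mul_nonneg (le_of_lt hν) (by linarith only [hν2])
  have n1 := mul_le_mul_of_nonneg_left hA1 n1c
  have n2c : (0:ℝ) ≤ 3 * (2 - ν) * (4 - 7 * ν + 2 * ν ^ 2) * γ := by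
    have h47 : (0:ℝ) ≤ 4 - 7 * ν + 2 * ν ^ 2 := by
      have := sq_nonneg ν
      linarith only [hν2, this]
    have := mul_nonneg (mul_nonneg (mul_nonneg (by norm_num : (0:ℝ) ≤ 3) (le_of_lt h2ν)) h47)
      (le_of_lt hγpos)
    linarith only [this]
  have n2 := mul_le_mul_of_nonneg_left hA2 n2c
  have n3c : (0:ℝ) ≤ 12 * (2 - ν) * γ :=
    mul_nonneg (mul_nonneg (by norm_num) (le_of_lt h2ν)) (le_of_lt hγpos)
  have n3 := mul_le_mul_of_nonneg_left hh2ub n3c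
  have n4c : (0:ℝ) ≤ 3 * (2 - ν) * (3 - 2 * ν) * a :=
    mul_nonneg (mul_nonneg (mul_nonneg (by norm_num) (le_of_lt h2ν)) (by linarith)) ha0
  have n4 := mul_le_mul_of_nonneg_left T2 n4c
  have n5c : (0:ℝ) ≤ 2 * ν * (3 - 2 * ν) * b :=
    mul_nonneg (mul_nonneg (mul_nonneg (by norm_num) (le_of_lt hν)) (by linarith)) hb0
  have n5 := mul_le_mul_of_nonneg_left T1 n5c
  have hX2nn : (0:ℝ) ≤ (6 + 3 * ν - 2 * ν ^ 2) * (ν * α * γ * b) := by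
    refine mul_nonneg ?_ ?_
    · have hx : ν * ν ≤ 1 / 2 * ν := mul_le_mul_of_nonneg_right hν2 (le_of_lt hν)
      have : ν ^ 2 = ν * ν := sq ν
      linarith only [hx, hν, this]
    exact mul_nonneg (mul_nonneg (mul_nonneg (le_of_lt hν) (le_of_lt hα)) (le_of_lt hγpos)) hb0
  have t1 := sub_nonneg.mpr n1
  have t2 := sub_nonneg.mpr n2
  have t3 := sub_nonneg.mpr n3
  have t4 := sub_nonneg.mpr n4
  have t5 := sub_nonneg.mpr n5
  have key2 : (0:ℝ) ≤ 12 * (2 - ν) * γ * ((1 - ν) * g - h2) := by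
    have e : 12 * (2 - ν) * γ * ((1 - ν) * g - h2) =
        (3 * (2 - ν) * (ν * (3 - 2 * ν)) * (γ * g)
          - 3 * (2 - ν) * (ν * (3 - 2 * ν)) * (α * a - 2 * (β * ξ) * b))
        + (3 * (2 - ν) * (4 - 7 * ν + 2 * ν ^ 2) * γ * g
          - 3 * (2 - ν) * (4 - 7 * ν + 2 * ν ^ 2) * γ * (α * b - 2 * (β * μ) * a))
        + (12 * (2 - ν) * γ * ((1 - 2 * ν) * α * b + (β * μ) * a) - 12 * (2 - ν) * γ * h2)
        + (3 * (2 - ν) * (3 - 2 * ν) * a * (ν * α)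
          - 3 * (2 - ν) * (3 - 2 * ν) * a * (2 * β * (2 - ν) * μ * γ))
        + (2 * ν * (3 - 2 * ν) * b * (ν * α * γ)
          - 2 * ν * (3 - 2 * ν) * b * (3 * β * (2 - ν) * ξ))
        + (6 + 3 * ν - 2 * ν ^ 2) * (ν * α * γ * b) := by ring
    rw [e]
    exact add_nonneg (add_nonneg (add_nonneg (add_nonneg (add_nonneg t1 t2) t3) t4) t5) hX2nn
  have G2 : h2 ≤ (1 - ν) * g := by
    rcases le_or_gt h2 ((1 - ν) * g) with h | h
    · exact h
    · exfalso
      have hpos' : (0:ℝ) < 12 * (2 - ν) * γ :=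
        mul_pos (mul_pos (by norm_num) h2ν) hγpos
      have hneg : 12 * (2 - ν) * γ * ((1 - ν) * g - h2) < 0 :=
        mul_neg_of_pos_of_neg hpos' (by linarith only [h])
      linarith only [key2, hneg]
  -- conclusion
  refine max_le ?_ ?_
  · rw [div_le_iff₀ hγpos]
    calc h1 ≤ (1 - ν) * γ * g := G1
      _ = (1 - ν) * g * γ := by ring
  · exact G2
end IsingSL
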